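/- arXiv:2206.03347 — 4 statements merged into one kernel-verified Lean document; each statement's English description precedes it below -/
import Mathlib

section
/- Let μ⁻, μ⁺ be probability measures on ℝ^d with compact supports X⁻, X⁺ and let c : X⁻ × X⁺ → ℝ be continuous. Then the function ε ↦ v_ε is continuous, non-decreasing and concave on [0,+∞). -/
open MeasureTheory Real Set Filter Classical
open scoped ENNReal NNReal Topology

noncomputable section

/-- Relative entropy (Kullback–Leibler divergence) `Ent(γ | q)`, with values in `EReal`:
it equals `∫ ρ log ρ dq` if `γ = ρ·q` (with `ρ log ρ` integrable) and `+∞` otherwise. -/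
def Ent {α : Type*} [MeasurableSpace α] (γ q : Measure α) : EReal :=
  if γ ≪ q ∧ Integrable (fun x => ((γ.rnDeriv q) x).toReal * Real.log ((γ.rnDeriv q) x).toReal) q
  then ((∫ x, ((γ.rnDeriv q) x).toReal * Real.log ((γ.rnDeriv q) x).toReal ∂q : ℝ) : EReal)
  else ⊤

/-- Entropic optimal transport cost
`v_ε = inf { ∫ c dγ + ε Ent(γ | μ⁻ ⊗ μ⁺) : γ coupling of μ⁻ and μ⁺ }`. -/
def entCost {α β : Type*} [MeasurableSpace α] [MeasurableSpace β]
    (μm : Measure α) (μp : Measure β) (c : α × β → ℝ) (ε : ℝ) : EReal :=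
  sInf {v : EReal | ∃ γ : Measure (α × β), IsProbabilityMeasure γ ∧ γ.fst = μm ∧ γ.snd = μp ∧
    v = ((∫ p, c p ∂γ : ℝ) : EReal) + (ε : EReal) * Ent γ (μm.prod μp)}

/-- Support of a measure: the set of points all of whose open neighbourhoods have
positive measure. -/
def msupport {α : Type*} [TopologicalSpace α] [MeasurableSpace α] (μ : Measure α) : Set α :=
  {x | ∀ U : Set α, IsOpen U → x ∈ U → μ U ≠ 0}


section helperlemmas
open Metric

lemma msupport_closed {α : Type*} [TopologicalSpace α] [MeasurableSpace α] (μ : Measure α) :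
    IsClosed (msupport μ) := by
  rw [← isOpen_compl_iff]
  have h : (msupport μ)ᶜ = ⋃₀ {U | IsOpen U ∧ μ U = 0} := by
    ext x
    simp only [mem_compl_iff, msupport, mem_setOf_eq, mem_sUnion, not_forall]
    constructor
    · rintro ⟨U, hU, hx, h0⟩
      exact ⟨U, ⟨hU, not_not.1 h0⟩, hx⟩
    · rintro ⟨U, ⟨hU, h0⟩, hx⟩
      exact ⟨U, hU, hx, not_not.2 h0⟩
  rw [h]
  exact isOpen_sUnion fun U hU => hU.1

lemma msupport_compl_null {α : Type*} [TopologicalSpace α] [MeasurableSpace α]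
    [SecondCountableTopology α] (μ : Measure α) : μ (msupport μ)ᶜ = 0 := by
  obtain ⟨b, hbc, -, hb⟩ := TopologicalSpace.exists_countable_basis α
  have hsub : (msupport μ)ᶜ ⊆ ⋃₀ {U ∈ b | μ U = 0} := by
    intro x hx
    simp only [mem_compl_iff, msupport, mem_setOf_eq, not_forall] at hx
    obtain ⟨U, hU, hxU, h0⟩ := hx
    obtain ⟨V, hVb, hxV, hVU⟩ := hb.exists_subset_of_mem_open hxU hU
    exact ⟨V, ⟨hVb, measure_mono_null hVU (not_not.1 h0)⟩, hxV⟩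
  refine measure_mono_null hsub ?_
  rw [measure_sUnion_null_iff (hbc.mono (sep_subset _ _))]
  exact fun U hU => hU.2

lemma ent_nonneg_cases {α : Type*} [MeasurableSpace α] (γ q : Measure α)
    [IsProbabilityMeasure γ] [IsProbabilityMeasure q] :
    Ent γ q = ⊤ ∨ ∃ r : ℝ, 0 ≤ r ∧ Ent γ q = (r : EReal) := by
  rw [Ent]
  split_ifs with h
  · right
    refine ⟨_, ?_, rfl⟩
    obtain ⟨hac, hint⟩ := h
    have h1 : ∫ x, ((γ.rnDeriv q) x).toReal ∂q = 1 := by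
      rw [Measure.integral_toReal_rnDeriv hac]; simp
    have h2 : ∫ x, (((γ.rnDeriv q) x).toReal - 1) ∂q = 0 := by
      rw [integral_sub (Measure.integrable_toReal_rnDeriv) (integrable_const 1), h1]
      simp
    have h3 : ∀ t : ℝ, 0 ≤ t → t - 1 ≤ t * Real.log t := by
      intro t ht
      rcases eq_or_lt_of_le ht with h | h
      · simp [← h]
      · have := Real.log_le_sub_one_of_pos (show (0:ℝ) < t⁻¹ by positivity)
        rw [Real.log_inv] at this
        have h4 : t * (-Real.log t) ≤ t * (t⁻¹ - 1) := by
          exact mul_le_mul_of_nonneg_left this ht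
        rw [mul_sub, mul_inv_cancel₀ h.ne'] at h4
        nlinarith
    calc (0:ℝ) = ∫ x, (((γ.rnDeriv q) x).toReal - 1) ∂q := h2.symm
      _ ≤ ∫ x, ((γ.rnDeriv q) x).toReal * Real.log ((γ.rnDeriv q) x).toReal ∂q := by
          refine integral_mono (Measure.integrable_toReal_rnDeriv.sub (integrable_const 1)) hint ?_
          intro x
          exact h3 _ ENNReal.toReal_nonneg
  · exact Or.inl rfl

lemma ent_self_zero {α : Type*} [MeasurableSpace α] (q : Measure α) [IsProbabilityMeasure q] :
    Ent q q = 0 := by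
  have hself := Measure.rnDeriv_self q
  have hcongr : (fun x => ((q.rnDeriv q) x).toReal * Real.log ((q.rnDeriv q) x).toReal)
      =ᵐ[q] (fun _ => (0:ℝ)) := by
    filter_upwards [hself] with x hx
    simp [hx]
  rw [Ent, if_pos]
  · rw [integral_congr_ae hcongr]
    simp
  · exact ⟨Measure.AbsolutelyContinuous.rfl, (integrable_const (0:ℝ)).congr hcongr.symm⟩

section conc
variable {α β : Type*} [TopologicalSpace α] [MeasurableSpace α] [OpensMeasurableSpace α]
  [SecondCountableTopology α]
  [TopologicalSpace β] [MeasurableSpace β] [OpensMeasurableSpace β] [SecondCountableTopology β]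

lemma coupling_conc {μm : Measure α} {μp : Measure β} (γ : Measure (α × β))
    (hf : γ.fst = μm) (hs : γ.snd = μp) :
    γ ((msupport μm ×ˢ msupport μp)ᶜ) = 0 := by
  refine measure_mono_null (t := (msupport μm)ᶜ ×ˢ univ ∪ univ ×ˢ (msupport μp)ᶜ)
    (by rw [Set.compl_prod_eq_union]) ?_
  refine measure_union_null ?_ ?_
  · have : ((msupport μm)ᶜ ×ˢ (univ : Set β)) = Prod.fst ⁻¹' (msupport μm)ᶜ := Set.prod_univ
    rw [this, ← Measure.fst_apply (msupport_closed μm).measurableSet.compl, hf]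
    exact msupport_compl_null μm
  · have : ((univ : Set α) ×ˢ (msupport μp)ᶜ) = Prod.snd ⁻¹' (msupport μp)ᶜ := Set.univ_prod
    rw [this, ← Measure.snd_apply (msupport_closed μp).measurableSet.compl, hs]
    exact msupport_compl_null μp
end conc

lemma integrable_and_bound {α : Type*} [MeasurableSpace α] [TopologicalSpace α]
    [OpensMeasurableSpace α] [SecondCountableTopology α] [TopologicalSpace.PseudoMetrizableSpace α]
    {γ : Measure α} [IsProbabilityMeasure γ] {K : Set α}
    (hK : IsClosed K) (hγK : γ Kᶜ = 0) {c : α → ℝ} (hc : ContinuousOn c K) {M : ℝ}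
    (hM : ∀ p ∈ K, |c p| ≤ M) : Integrable c γ ∧ |∫ p, c p ∂γ| ≤ M := by
  have hae : ∀ᵐ p ∂γ, p ∈ K := by
    rw [ae_iff]
    exact hγK
  have hsm : AEStronglyMeasurable c γ := by
    have := hc.aestronglyMeasurable (μ := γ) hK.measurableSet
    rwa [Measure.restrict_eq_self_of_ae_mem hae] at this
  have hbd : ∀ᵐ p ∂γ, ‖c p‖ ≤ M := by
    filter_upwards [hae] with p hp using hM p hp
  have hint : Integrable c γ := Integrable.mono' (integrable_const M) hsm hbd
  refine ⟨hint, ?_⟩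
  have := norm_integral_le_of_norm_le_const (μ := γ) hbd
  simpa using this

/-- finite partition of a compact set into small measurable pieces -/
lemma compact_partition {α : Type*} [MeasurableSpace α] [MetricSpace α] [BorelSpace α]
    {K : Set α} (hK : IsCompact K) {η : ℝ} (hη : 0 < η) :
    ∃ (n : ℕ) (A : Fin n → Set α), (∀ i, MeasurableSet (A i)) ∧ (∀ i, A i ⊆ K) ∧
      (Pairwise (Function.onFun Disjoint A)) ∧ (⋃ i, A i) = K ∧
      ∀ i, ∀ x ∈ A i, ∀ y ∈ A i, dist x y < η := by
  obtain ⟨t, -, htf, htc⟩ := hK.finite_cover_balls (e := η / 2) (by linarith)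
  obtain ⟨n, f, hf⟩ := htf.fin_embedding
  refine ⟨n, fun i => (K ∩ ball (f i) (η / 2)) \ ⋃ j : Fin n, ⋃ (_ : j < i), ball (f j) (η / 2),
    ?_, ?_, ?_, ?_, ?_⟩
  · intro i
    exact ((hK.isClosed.measurableSet.inter measurableSet_ball).diff
      (MeasurableSet.iUnion fun j => MeasurableSet.iUnion fun _ => measurableSet_ball))
  · intro i
    exact fun x hx => hx.1.1
  · intro i j hij
    rcases lt_or_gt_of_ne hij with h | h
    · refine Set.disjoint_left.2 fun x hx hx' => ?_
      exact hx'.2 (Set.mem_iUnion.2 ⟨i, Set.mem_iUnion.2 ⟨h, hx.1.2⟩⟩)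
    · refine Set.disjoint_left.2 fun x hx hx' => ?_
      exact hx.2 (Set.mem_iUnion.2 ⟨j, Set.mem_iUnion.2 ⟨h, hx'.1.2⟩⟩)
  · apply Set.Subset.antisymm
    · exact Set.iUnion_subset fun i x hx => hx.1.1
    · intro x hx
      have : x ∈ ⋃ y ∈ t, ball y (η / 2) := htc hx
      rw [← hf] at this
      simp only [Set.mem_iUnion, Set.mem_range] at this
      obtain ⟨y, ⟨i, rfl⟩, hy⟩ := this
      classical
      have hs : (Finset.univ.filter (fun j : Fin n => x ∈ ball (f j) (η / 2))).Nonempty :=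
        ⟨i, Finset.mem_filter.2 ⟨Finset.mem_univ i, hy⟩⟩
      set i₀ := (Finset.univ.filter (fun j : Fin n => x ∈ ball (f j) (η / 2))).min' hs with hi₀def
      have hxi₀ : x ∈ ball (f i₀) (η / 2) := by
        have := Finset.min'_mem _ hs
        exact (Finset.mem_filter.1 this).2
      refine Set.mem_iUnion.2 ⟨i₀, ⟨⟨hx, hxi₀⟩, ?_⟩⟩
      intro hmem
      simp only [Set.mem_iUnion] at hmem
      obtain ⟨j, hj, hxj⟩ := hmem
      exact absurd (Finset.min'_le _ j (Finset.mem_filter.2 ⟨Finset.mem_univ j, hxj⟩)) (not_le.2 hj)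
  · intro i x hx y hy
    have h1 : x ∈ ball (f i) (η / 2) := hx.1.2
    have h2 : y ∈ ball (f i) (η / 2) := hy.1.2
    calc dist x y ≤ dist x (f i) + dist (f i) y := dist_triangle _ _ _
      _ < η / 2 + η / 2 := by
          rw [mem_ball] at h1 h2
          rw [dist_comm (f i) y] at *
          linarith [h1, h2]
      _ = η := by ring

section block
variable {α β : Type*} [MeasurableSpace α] [MetricSpace α] [BorelSpace α]
  [SecondCountableTopology α]
  [MeasurableSpace β] [MetricSpace β] [BorelSpace β] [SecondCountableTopology β]

lemma block_approx (μm : Measure α) (μp : Measure β)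
    [IsProbabilityMeasure μm] [IsProbabilityMeasure μp]
    (hXm : IsCompact (msupport μm)) (hXp : IsCompact (msupport μp))
    (c : α × β → ℝ) (hc : ContinuousOn c (msupport μm ×ˢ msupport μp))
    (γ : Measure (α × β)) [IsProbabilityMeasure γ] (hγf : γ.fst = μm) (hγs : γ.snd = μp)
    {δ : ℝ} (hδ : 0 < δ) :
    ∃ γ' : Measure (α × β), IsProbabilityMeasure γ' ∧ γ'.fst = μm ∧ γ'.snd = μp ∧
      Ent γ' (μm.prod μp) ≠ ⊤ ∧ ∫ p, c p ∂γ' ≤ ∫ p, c p ∂γ + δ := by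
  classical
  set Km := msupport μm with hKm
  set Kp := msupport μp with hKp
  set K : Set (α × β) := Km ×ˢ Kp with hKdef
  have hKcomp : IsCompact K := hXm.prod hXp
  have hKclosed : IsClosed K := (msupport_closed μm).prod (msupport_closed μp)
  -- uniform continuity
  have huc : UniformContinuousOn c K := hKcomp.uniformContinuousOn_of_continuous hc
  rw [Metric.uniformContinuousOn_iff] at huc
  obtain ⟨η, hη, hηc⟩ := huc (δ / 4) (by linarith)
  -- partitions
  obtain ⟨n, A, hAm, hAK, hAd, hAu, hAdiam⟩ := compact_partition hXm hη
  obtain ⟨m, B, hBm, hBK, hBd, hBu, hBdiam⟩ := compact_partition hXp hη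
  set q : Measure (α × β) := μm.prod μp with hq
  set P : Fin n → Fin m → Set (α × β) := fun i j => A i ×ˢ B j with hP
  have hPm : ∀ i j, MeasurableSet (P i j) := fun i j => (hAm i).prod (hBm j)
  set w : Fin n → Fin m → ℝ≥0∞ := fun i j => γ (P i j) with hw
  set cc : Fin n → Fin m → ℝ≥0∞ :=
    fun i j => w i j * (μm (A i))⁻¹ * (μp (B j))⁻¹ with hcc
  set γ' : Measure (α × β) :=
    ∑ i, ∑ j, cc i j • ((μm.restrict (A i)).prod (μp.restrict (B j))) with hγ'
  -- the master formula
  have hform : ∀ s : Set (α × β), MeasurableSet s →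
      γ' s = ∑ i, ∑ j, cc i j * q (s ∩ P i j) := by
    intro s hs
    rw [hγ', Measure.finset_sum_apply]
    refine Finset.sum_congr rfl fun i _ => ?_
    rw [Measure.finset_sum_apply]
    refine Finset.sum_congr rfl fun j _ => ?_
    rw [Measure.smul_apply, Measure.prod_restrict, Measure.restrict_apply hs]
    rfl
  -- basic mass facts
  have hw_le_a : ∀ i j, w i j ≤ μm (A i) := by
    intro i j
    have h1 : P i j ⊆ A i ×ˢ univ := Set.prod_mono_right (Set.subset_univ _)
    calc w i j ≤ γ (A i ×ˢ univ) := measure_mono h1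
      _ = γ.fst (A i) := by rw [Measure.fst_apply (hAm i), Set.prod_univ]
      _ = μm (A i) := by rw [hγf]
  have hw_le_b : ∀ i j, w i j ≤ μp (B j) := by
    intro i j
    have h1 : P i j ⊆ univ ×ˢ B j := Set.prod_mono_left (Set.subset_univ _)
    calc w i j ≤ γ (univ ×ˢ B j) := measure_mono h1
      _ = γ.snd (B j) := by rw [Measure.snd_apply (hBm j), Set.univ_prod]
      _ = μp (B j) := by rw [hγs]
  have ha_ne_top : ∀ i, μm (A i) ≠ ⊤ := fun i => measure_ne_top _ _
  have hb_ne_top : ∀ j, μp (B j) ≠ ⊤ := fun j => measure_ne_top _ _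
  have hcc_ne_top : ∀ i j, cc i j ≠ ⊤ := by
    intro i j
    by_cases ha : μm (A i) = 0
    · have hw0 : w i j = 0 := le_antisymm (ha ▸ hw_le_a i j) zero_le
      simp [hcc, hw0]
    · by_cases hb : μp (B j) = 0
      · have hw0 : w i j = 0 := le_antisymm (hb ▸ hw_le_b i j) zero_le
        simp [hcc, hw0]
      · exact ENNReal.mul_ne_top (ENNReal.mul_ne_top (measure_ne_top _ _)
          (ENNReal.inv_ne_top.2 ha)) (ENNReal.inv_ne_top.2 hb)
  -- block masses agree
  have hblock : ∀ i₀ j₀, γ' (P i₀ j₀) = w i₀ j₀ := by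
    intro i₀ j₀
    rw [hform _ (hPm i₀ j₀)]
    have hterm : ∀ i j, cc i j * q (P i₀ j₀ ∩ P i j)
        = if i = i₀ ∧ j = j₀ then cc i j * q (P i j) else 0 := by
      intro i j
      split_ifs with hij
      · obtain ⟨rfl, rfl⟩ := hij
        rw [Set.inter_self]
      · have : P i₀ j₀ ∩ P i j = ∅ := by
          rw [hP]
          dsimp only
          rw [Set.prod_inter_prod]
          rcases not_and_or.1 hij with h | h
          · rw [Set.disjoint_iff_inter_eq_empty.1 (hAd (Ne.symm h)), Set.empty_prod]
          · rw [Set.disjoint_iff_inter_eq_empty.1 (hBd (Ne.symm h)), Set.prod_empty]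
        rw [this, measure_empty, mul_zero]
    rw [Finset.sum_congr rfl fun i _ => Finset.sum_congr rfl fun j _ => hterm i j]
    rw [Finset.sum_eq_single i₀]
    · rw [Finset.sum_eq_single j₀]
      · rw [if_pos (⟨rfl, rfl⟩ : i₀ = i₀ ∧ j₀ = j₀)]
        by_cases ha : μm (A i₀) = 0
        · have hw0 : w i₀ j₀ = 0 := le_antisymm (ha ▸ hw_le_a i₀ j₀) zero_le
          simp [hcc, hw0]
        · by_cases hb : μp (B j₀) = 0
          · have hw0 : w i₀ j₀ = 0 := le_antisymm (hb ▸ hw_le_b i₀ j₀) zero_le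
            simp [hcc, hw0]
          · have hqP : q (P i₀ j₀) = μm (A i₀) * μp (B j₀) := Measure.prod_prod _ _
            rw [hqP]
            show w i₀ j₀ * (μm (A i₀))⁻¹ * (μp (B j₀))⁻¹ * (μm (A i₀) * μp (B j₀)) = w i₀ j₀
            have h1 : (μm (A i₀))⁻¹ * μm (A i₀) = 1 := ENNReal.inv_mul_cancel ha (ha_ne_top i₀)
            have h2 : (μp (B j₀))⁻¹ * μp (B j₀) = 1 := ENNReal.inv_mul_cancel hb (hb_ne_top j₀)
            calc w i₀ j₀ * (μm (A i₀))⁻¹ * (μp (B j₀))⁻¹ * (μm (A i₀) * μp (B j₀))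
                = w i₀ j₀ * (((μm (A i₀))⁻¹ * μm (A i₀)) * ((μp (B j₀))⁻¹ * μp (B j₀))) := by ring
              _ = w i₀ j₀ := by rw [h1, h2, one_mul, mul_one]
      · intro j _ hj
        rw [if_neg (fun h => hj h.2)]
      · intro h; exact absurd (Finset.mem_univ j₀) h
    · intro i _ hi
      rw [Finset.sum_eq_zero]
      intro j _
      rw [if_neg (fun h => hi h.1)]
    · intro h; exact absurd (Finset.mem_univ i₀) h

  -- row/column sums
  have hsum_j : ∀ i, ∑ j, w i j = μm (A i) := by
    intro i
    have hdisj : ((Finset.univ : Finset (Fin m)) : Set (Fin m)).PairwiseDisjoint (fun j => P i j) := by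
      intro j1 _ j2 _ hne
      refine Set.disjoint_left.2 fun p hp hp' => ?_
      exact Set.disjoint_left.1 (hBd hne) hp.2 hp'.2
    have h0 : γ (⋃ j ∈ Finset.univ, P i j) = ∑ j, w i j :=
      measure_biUnion_finset hdisj (fun j _ => hPm i j)
    have hU : (⋃ j ∈ Finset.univ, P i j) = A i ×ˢ Kp := by
      simp only [Finset.mem_univ, Set.iUnion_true]
      rw [hP]
      dsimp only
      rw [← Set.prod_iUnion, hBu]
    have h2 : γ (A i ×ˢ Kp) = μm (A i) := by
      have hle : γ (A i ×ˢ univ) ≤ γ (A i ×ˢ Kp) + γ (univ ×ˢ Kpᶜ) := by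
        refine le_trans (measure_mono ?_) (measure_union_le _ _)
        rintro ⟨x, y⟩ ⟨hx, -⟩
        by_cases hy : y ∈ Kp
        · exact Or.inl ⟨hx, hy⟩
        · exact Or.inr ⟨trivial, hy⟩
      have hz : γ (univ ×ˢ Kpᶜ) = 0 := by
        rw [Set.univ_prod, ← Measure.snd_apply (msupport_closed μp).measurableSet.compl, hγs]
        exact msupport_compl_null μp
      have hfst' : γ (A i ×ˢ univ) = μm (A i) := by
        rw [Set.prod_univ, ← Measure.fst_apply (hAm i), hγf]
      refine le_antisymm ?_ ?_
      · rw [← hfst']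
        exact measure_mono (Set.prod_mono_right (Set.subset_univ _))
      · rw [← hfst']
        rw [hz, add_zero] at hle
        exact hle
    rw [← h0, hU, h2]
  have hsum_i : ∀ j, ∑ i, w i j = μp (B j) := by
    intro j
    have hdisj : ((Finset.univ : Finset (Fin n)) : Set (Fin n)).PairwiseDisjoint (fun i => P i j) := by
      intro i1 _ i2 _ hne
      refine Set.disjoint_left.2 fun p hp hp' => ?_
      exact Set.disjoint_left.1 (hAd hne) hp.1 hp'.1
    have h0 : γ (⋃ i ∈ Finset.univ, P i j) = ∑ i, w i j :=
      measure_biUnion_finset hdisj (fun i _ => hPm i j)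
    have hU : (⋃ i ∈ Finset.univ, P i j) = Km ×ˢ B j := by
      simp only [Finset.mem_univ, Set.iUnion_true]
      rw [hP]
      dsimp only
      rw [← Set.iUnion_prod_const, hAu]
    have h2 : γ (Km ×ˢ B j) = μp (B j) := by
      have hle : γ (univ ×ˢ B j) ≤ γ (Km ×ˢ B j) + γ (Kmᶜ ×ˢ univ) := by
        refine le_trans (measure_mono ?_) (measure_union_le _ _)
        rintro ⟨x, y⟩ ⟨-, hy⟩
        by_cases hx : x ∈ Km
        · exact Or.inl ⟨hx, hy⟩
        · exact Or.inr ⟨hx, trivial⟩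
      have hz : γ (Kmᶜ ×ˢ univ) = 0 := by
        rw [Set.prod_univ, ← Measure.fst_apply (msupport_closed μm).measurableSet.compl, hγf]
        exact msupport_compl_null μm
      have hsnd' : γ (univ ×ˢ B j) = μp (B j) := by
        rw [Set.univ_prod, ← Measure.snd_apply (hBm j), hγs]
      refine le_antisymm ?_ ?_
      · rw [← hsnd']
        exact measure_mono (Set.prod_mono_left (Set.subset_univ _))
      · rw [← hsnd']
        rw [hz, add_zero] at hle
        exact hle
    rw [← h0, hU, h2]
  -- first marginal
  have hfst : γ'.fst = μm := by
    refine Measure.ext fun s hs => ?_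
    rw [Measure.fst_apply hs, ← Set.prod_univ, hform _ (hs.prod MeasurableSet.univ)]
    have hterm : ∀ i j, cc i j * q ((s ×ˢ univ) ∩ P i j)
        = w i j * ((μm (A i))⁻¹ * μm (s ∩ A i)) := by
      intro i j
      have hint : (s ×ˢ (univ : Set β)) ∩ P i j = (s ∩ A i) ×ˢ B j := by
        rw [hP]
        dsimp only
        rw [Set.prod_inter_prod, Set.univ_inter]
      rw [hint, Measure.prod_prod]
      by_cases hb : μp (B j) = 0
      · have hw0 : w i j = 0 := le_antisymm (hb ▸ hw_le_b i j) zero_le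
        simp [hcc, hw0]
      · show w i j * (μm (A i))⁻¹ * (μp (B j))⁻¹ * (μm (s ∩ A i) * μp (B j)) = _
        have h2 : (μp (B j))⁻¹ * μp (B j) = 1 := ENNReal.inv_mul_cancel hb (hb_ne_top j)
        calc w i j * (μm (A i))⁻¹ * (μp (B j))⁻¹ * (μm (s ∩ A i) * μp (B j))
            = (w i j * ((μm (A i))⁻¹ * μm (s ∩ A i))) * ((μp (B j))⁻¹ * μp (B j)) := by ring
          _ = w i j * ((μm (A i))⁻¹ * μm (s ∩ A i)) := by rw [h2, mul_one]
    rw [Finset.sum_congr rfl fun i _ => Finset.sum_congr rfl fun j _ => hterm i j]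
    have hin : ∀ i : Fin n, ∑ j, w i j * ((μm (A i))⁻¹ * μm (s ∩ A i)) = μm (s ∩ A i) := by
      intro i
      rw [← Finset.sum_mul, hsum_j i]
      by_cases ha : μm (A i) = 0
      · have h0 : μm (s ∩ A i) = 0 := measure_mono_null Set.inter_subset_right ha
        simp [ha, h0]
      · calc μm (A i) * ((μm (A i))⁻¹ * μm (s ∩ A i))
            = (μm (A i) * (μm (A i))⁻¹) * μm (s ∩ A i) := by ring
          _ = μm (s ∩ A i) := by rw [ENNReal.mul_inv_cancel ha (ha_ne_top i), one_mul]
    rw [Finset.sum_congr rfl fun i _ => hin i]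
    have hdisjA : ((Finset.univ : Finset (Fin n)) : Set (Fin n)).PairwiseDisjoint (fun i => s ∩ A i) := by
      intro i1 _ i2 _ hne
      exact (hAd hne).mono Set.inter_subset_right Set.inter_subset_right
    rw [← measure_biUnion_finset hdisjA (fun i _ => hs.inter (hAm i))]
    have hU : (⋃ i ∈ Finset.univ, s ∩ A i) = s ∩ Km := by
      simp only [Finset.mem_univ, Set.iUnion_true]
      rw [← Set.inter_iUnion, hAu]
    rw [hU]
    refine le_antisymm (measure_mono Set.inter_subset_left) ?_
    calc μm s ≤ μm (s ∩ Km) + μm Kmᶜ := by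
          refine le_trans (measure_mono ?_) (measure_union_le _ _)
          intro x hx
          by_cases hxK : x ∈ Km
          · exact Or.inl ⟨hx, hxK⟩
          · exact Or.inr hxK
      _ = μm (s ∩ Km) := by rw [msupport_compl_null μm, add_zero]
  -- second marginal
  have hsnd : γ'.snd = μp := by
    refine Measure.ext fun s hs => ?_
    rw [Measure.snd_apply hs, ← Set.univ_prod, hform _ (MeasurableSet.univ.prod hs)]
    have hterm : ∀ i j, cc i j * q (((univ : Set α) ×ˢ s) ∩ P i j)
        = w i j * ((μp (B j))⁻¹ * μp (s ∩ B j)) := by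
      intro i j
      have hint : ((univ : Set α) ×ˢ s) ∩ P i j = A i ×ˢ (s ∩ B j) := by
        rw [hP]
        dsimp only
        rw [Set.prod_inter_prod, Set.univ_inter]
      rw [hint, Measure.prod_prod]
      by_cases ha : μm (A i) = 0
      · have hw0 : w i j = 0 := le_antisymm (ha ▸ hw_le_a i j) zero_le
        simp [hcc, hw0]
      · show w i j * (μm (A i))⁻¹ * (μp (B j))⁻¹ * (μm (A i) * μp (s ∩ B j)) = _
        have h2 : (μm (A i))⁻¹ * μm (A i) = 1 := ENNReal.inv_mul_cancel ha (ha_ne_top i)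
        calc w i j * (μm (A i))⁻¹ * (μp (B j))⁻¹ * (μm (A i) * μp (s ∩ B j))
            = (w i j * ((μp (B j))⁻¹ * μp (s ∩ B j))) * ((μm (A i))⁻¹ * μm (A i)) := by ring
          _ = w i j * ((μp (B j))⁻¹ * μp (s ∩ B j)) := by rw [h2, mul_one]
    rw [Finset.sum_congr rfl fun i _ => Finset.sum_congr rfl fun j _ => hterm i j]
    rw [Finset.sum_comm]
    have hin : ∀ j : Fin m, ∑ i, w i j * ((μp (B j))⁻¹ * μp (s ∩ B j)) = μp (s ∩ B j) := by
      intro j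
      rw [← Finset.sum_mul, hsum_i j]
      by_cases hb : μp (B j) = 0
      · have h0 : μp (s ∩ B j) = 0 := measure_mono_null Set.inter_subset_right hb
        simp [hb, h0]
      · calc μp (B j) * ((μp (B j))⁻¹ * μp (s ∩ B j))
            = (μp (B j) * (μp (B j))⁻¹) * μp (s ∩ B j) := by ring
          _ = μp (s ∩ B j) := by rw [ENNReal.mul_inv_cancel hb (hb_ne_top j), one_mul]
    rw [Finset.sum_congr rfl fun j _ => hin j]
    have hdisjB : ((Finset.univ : Finset (Fin m)) : Set (Fin m)).PairwiseDisjoint (fun j => s ∩ B j) := by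
      intro j1 _ j2 _ hne
      exact (hBd hne).mono Set.inter_subset_right Set.inter_subset_right
    rw [← measure_biUnion_finset hdisjB (fun j _ => hs.inter (hBm j))]
    have hU : (⋃ j ∈ Finset.univ, s ∩ B j) = s ∩ Kp := by
      simp only [Finset.mem_univ, Set.iUnion_true]
      rw [← Set.inter_iUnion, hBu]
    rw [hU]
    refine le_antisymm (measure_mono Set.inter_subset_left) ?_
    calc μp s ≤ μp (s ∩ Kp) + μp Kpᶜ := by
          refine le_trans (measure_mono ?_) (measure_union_le _ _)
          intro y hy
          by_cases hyK : y ∈ Kp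
          · exact Or.inl ⟨hy, hyK⟩
          · exact Or.inr hyK
      _ = μp (s ∩ Kp) := by rw [msupport_compl_null μp, add_zero]
  have hγ'prob : IsProbabilityMeasure γ' := by
    constructor
    have h1 : γ' univ = γ'.fst univ := by
      rw [Measure.fst_apply MeasurableSet.univ, Set.preimage_univ]
    rw [h1, hfst]
    exact measure_univ

  -- density representation
  set ρ : α × β → ℝ≥0∞ := fun p => ∑ i, ∑ j, (P i j).indicator (fun _ => cc i j) p with hρ
  have hρmeas : Measurable ρ := by
    apply Finset.measurable_sum
    intro i _
    apply Finset.measurable_sum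
    intro j _
    exact measurable_const.indicator (hPm i j)
  have hγ'd : γ' = q.withDensity ρ := by
    refine Measure.ext fun s hs => ?_
    rw [hform s hs, withDensity_apply _ hs]
    rw [lintegral_finset_sum _
      (fun i _ => Finset.measurable_sum _ fun j _ => measurable_const.indicator (hPm i j))]
    refine (Finset.sum_congr rfl fun i _ => ?_).symm
    rw [lintegral_finset_sum _ (fun j _ => measurable_const.indicator (hPm i j))]
    refine Finset.sum_congr rfl fun j _ => ?_
    rw [lintegral_indicator_const (hPm i j), Measure.restrict_apply (hPm i j), Set.inter_comm]
  have hac : γ' ≪ q := by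
    rw [hγ'd]; exact withDensity_absolutelyContinuous _ _
  have hrn : γ'.rnDeriv q =ᵐ[q] ρ := by
    rw [hγ'd]; exact Measure.rnDeriv_withDensity q hρmeas
  set C : ℝ≥0∞ := ∑ i, ∑ j, cc i j with hC
  have hCne : C ≠ ⊤ := by
    rw [hC]
    refine (ENNReal.sum_lt_top.2 fun i _ => ?_).ne
    exact ENNReal.sum_lt_top.2 fun j _ => (hcc_ne_top i j).lt_top
  have hρle : ∀ p, ρ p ≤ C := by
    intro p
    refine Finset.sum_le_sum fun i _ => Finset.sum_le_sum fun j _ => ?_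
    by_cases hp : p ∈ P i j
    · rw [Set.indicator_of_mem hp]
    · rw [Set.indicator_of_notMem hp]; exact zero_le
  obtain ⟨Bb, hBb⟩ := (isCompact_Icc : IsCompact (Icc (0:ℝ) C.toReal)).exists_bound_of_continuousOn
    (Real.continuous_mul_log.continuousOn)
  have hg_meas : Measurable (fun p => (ρ p).toReal * Real.log (ρ p).toReal) := by
    have h1 : Measurable fun p => (ρ p).toReal := hρmeas.ennreal_toReal
    exact Real.continuous_mul_log.measurable.comp h1
  have hg_int : Integrable (fun p => (ρ p).toReal * Real.log (ρ p).toReal) q := by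
    refine Integrable.mono' (integrable_const Bb) hg_meas.aestronglyMeasurable ?_
    refine Eventually.of_forall fun p => ?_
    have hmem : (ρ p).toReal ∈ Icc (0:ℝ) C.toReal :=
      ⟨ENNReal.toReal_nonneg, ENNReal.toReal_mono hCne (hρle p)⟩
    exact hBb _ hmem
  have hEnt : Ent γ' q ≠ ⊤ := by
    have hcongr : (fun x => ((γ'.rnDeriv q) x).toReal * Real.log ((γ'.rnDeriv q) x).toReal)
        =ᵐ[q] (fun p => (ρ p).toReal * Real.log (ρ p).toReal) := by
      filter_upwards [hrn] with x hx
      rw [hx]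
    rw [Ent, if_pos ⟨hac, hg_int.congr hcongr.symm⟩]
    exact EReal.coe_ne_top _
  -- the simple comparison function φ
  set v : Fin n → Fin m → ℝ := fun i j => if h : (P i j).Nonempty then c h.choose else 0 with hv
  set φ : α × β → ℝ := fun p => ∑ i, ∑ j, (P i j).indicator (fun _ => v i j) p with hφ
  have hPK : ∀ i j, P i j ⊆ K := fun i j => Set.prod_mono (hAK i) (hBK j)
  have hφ_close : ∀ p ∈ K, |c p - φ p| ≤ δ / 4 := by
    intro p hp
    have hp1 : p.1 ∈ ⋃ i, A i := hAu.symm ▸ hp.1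
    have hp2 : p.2 ∈ ⋃ j, B j := hBu.symm ▸ hp.2
    obtain ⟨i₀, hi₀⟩ := Set.mem_iUnion.1 hp1
    obtain ⟨j₀, hj₀⟩ := Set.mem_iUnion.1 hp2
    have hpP : p ∈ P i₀ j₀ := ⟨hi₀, hj₀⟩
    have hφp : φ p = v i₀ j₀ := by
      rw [hφ]
      dsimp only
      rw [Finset.sum_eq_single i₀]
      · rw [Finset.sum_eq_single j₀]
        · exact Set.indicator_of_mem hpP _
        · intro j _ hj
          refine Set.indicator_of_notMem ?_ _
          intro hmem
          exact Set.disjoint_left.1 (hBd hj) hmem.2 hj₀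
        · intro h; exact absurd (Finset.mem_univ j₀) h
      · intro i _ hi
        refine Finset.sum_eq_zero fun j _ => ?_
        refine Set.indicator_of_notMem ?_ _
        intro hmem
        exact Set.disjoint_left.1 (hAd hi) hmem.1 hi₀
      · intro h; exact absurd (Finset.mem_univ i₀) h
    have hnon : (P i₀ j₀).Nonempty := ⟨p, hpP⟩
    have hvp : v i₀ j₀ = c hnon.choose := by
      rw [hv]
      dsimp only
      rw [dif_pos hnon]
    have hp₀ : hnon.choose ∈ P i₀ j₀ := hnon.choose_spec
    have hdist : dist p hnon.choose < η := by
      rw [Prod.dist_eq]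
      refine max_lt ?_ ?_
      · exact hAdiam i₀ _ hpP.1 _ hp₀.1
      · exact hBdiam j₀ _ hpP.2 _ hp₀.2
    have := hηc p hp hnon.choose (hPK i₀ j₀ hp₀) hdist
    rw [Real.dist_eq] at this
    rw [hφp, hvp]
    exact this.le
  -- integrability of c
  obtain ⟨M₀, hM₀⟩ := hKcomp.exists_bound_of_continuousOn hc
  have hγK : γ Kᶜ = 0 := coupling_conc γ hγf hγs
  have hγ'K : γ' Kᶜ = 0 := coupling_conc γ' hfst hsnd
  have habs : ∀ p ∈ K, |c p| ≤ M₀ := fun p hp => by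
    simpa [Real.norm_eq_abs] using hM₀ p hp
  obtain ⟨hint_c, -⟩ := integrable_and_bound hKclosed hγK hc habs
  obtain ⟨hint_c', -⟩ := integrable_and_bound (γ := γ') hKclosed hγ'K hc habs
  have hφ_int : ∀ (μ : Measure (α × β)), IsFiniteMeasure μ → Integrable φ μ := by
    intro μ hμ
    apply integrable_finset_sum
    intro i _
    apply integrable_finset_sum
    intro j _
    exact (integrable_const _).indicator (hPm i j)
  have hφγ : ∫ p, φ p ∂γ = ∑ i, ∑ j, (γ (P i j)).toReal • v i j := by
    rw [hφ]
    rw [integral_finset_sum _ (fun i _ => integrable_finset_sum _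
      (fun j _ => (integrable_const _).indicator (hPm i j)))]
    refine Finset.sum_congr rfl fun i _ => ?_
    rw [integral_finset_sum _ (fun j _ => (integrable_const _).indicator (hPm i j))]
    exact Finset.sum_congr rfl fun j _ => integral_indicator_const _ (hPm i j)
  have hφγ' : ∫ p, φ p ∂γ' = ∫ p, φ p ∂γ := by
    rw [hφγ, hφ]
    rw [integral_finset_sum _ (fun i _ => integrable_finset_sum _
      (fun j _ => (integrable_const _).indicator (hPm i j)))]
    refine Finset.sum_congr rfl fun i _ => ?_
    rw [integral_finset_sum _ (fun j _ => (integrable_const _).indicator (hPm i j))]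
    refine Finset.sum_congr rfl fun j _ => ?_
    rw [integral_indicator_const _ (hPm i j), measureReal_def, hblock i j]
  have hcomp : ∀ (μ : Measure (α × β)), IsProbabilityMeasure μ → μ Kᶜ = 0 → Integrable c μ →
      |∫ p, c p ∂μ - ∫ p, φ p ∂μ| ≤ δ / 4 := by
    intro μ hμprob hμK hintc
    rw [← integral_sub hintc (hφ_int μ inferInstance)]
    have hae : ∀ᵐ p ∂μ, p ∈ K := by
      rw [ae_iff]
      exact hμK
    have hb : ∀ᵐ p ∂μ, ‖c p - φ p‖ ≤ δ / 4 := by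
      filter_upwards [hae] with p hp
      simpa [Real.norm_eq_abs] using hφ_close p hp
    have := norm_integral_le_of_norm_le_const (μ := μ) hb
    simpa [Real.norm_eq_abs] using this
  have h1 := hcomp γ inferInstance hγK hint_c
  have h2 := hcomp γ' hγ'prob hγ'K hint_c'
  refine ⟨γ', hγ'prob, hfst, hsnd, ?_, ?_⟩
  · exact hEnt
  · rw [abs_le] at h1 h2
    rw [hφγ'] at h2
    linarith [h1.1, h1.2, h2.1, h2.2, hδ]


end block

lemma concave_mono_continuousOn {f : ℝ → ℝ} (hm : MonotoneOn f (Ici 0))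
    (hc : ConcaveOn ℝ (Ici 0) f)
    (h0 : ∀ δ > 0, ∃ ε₀ > 0, ∀ ε ∈ Icc 0 ε₀, |f ε - f 0| ≤ δ) :
    ContinuousOn f (Ici 0) := by
  intro x hx
  rcases eq_or_lt_of_le (mem_Ici.1 hx) with h | hxpos
  · -- x = 0
    rw [Metric.continuousWithinAt_iff]
    intro ε hε
    obtain ⟨ε₀, hε₀, hbd⟩ := h0 (ε / 2) (by linarith)
    refine ⟨ε₀, hε₀, fun y hy hd => ?_⟩
    rw [Real.dist_eq, ← h] at hd ⊢
    rw [sub_zero] at hd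
    have hy0 : 0 ≤ y := mem_Ici.1 hy
    have : y ∈ Icc 0 ε₀ := ⟨hy0, by rw [abs_of_nonneg hy0] at hd; linarith⟩
    calc |f y - f 0| ≤ ε / 2 := hbd y this
      _ < ε := by linarith
  · -- x > 0
    set L : ℝ := (f x - f 0) / x with hL
    have hf0x : f 0 ≤ f x := hm (self_mem_Ici) hx hxpos.le
    have hLnn : 0 ≤ L := div_nonneg (by linarith) hxpos.le
    have hxne : x ≠ 0 := hxpos.ne'
    have key : ∀ y ∈ Ici (0:ℝ), |f y - f x| ≤ |y - x| * (L + 1) := by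
      intro y hy
      have hy0 : (0:ℝ) ≤ y := hy
      rcases le_or_gt y x with hyx | hxy
      · -- y ≤ x : f x - f y ≤ ((x - y)/x) (f x - f 0)
        have ht0 : 0 ≤ y / x := div_nonneg hy0 hxpos.le
        have ht1 : y / x ≤ 1 := (div_le_one hxpos).2 hyx
        have hcomb : (y / x) • f x + (1 - y / x) • f 0 ≤ f ((y / x) • x + (1 - y / x) • (0:ℝ)) :=
          hc.2 hx (self_mem_Ici : (0:ℝ) ∈ Ici 0) ht0 (by linarith) (by ring)
        simp only [smul_eq_mul, mul_zero, add_zero] at hcomb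
        rw [div_mul_cancel₀ _ hxne] at hcomb
        -- hcomb : y/x * f x + (1 - y/x) * f 0 ≤ f y
        have h3 : f x - f y ≤ (1 - y / x) * (f x - f 0) := by nlinarith [hcomb]
        have h2 : (1 - y / x) * (f x - f 0) = (x - y) * L := by
          rw [hL]; field_simp
        have hmono : f y ≤ f x := hm hy hx hyx
        rw [abs_of_nonpos (by linarith), abs_of_nonpos (by linarith)]
        nlinarith [h3, h2, hLnn]
      · -- x < y
        have hy0' : (0:ℝ) < y := lt_trans hxpos hxy
        have ht0 : 0 ≤ x / y := div_nonneg hxpos.le hy0'.le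
        have ht1 : x / y ≤ 1 := (div_le_one hy0').2 hxy.le
        have hcomb : (x / y) • f y + (1 - x / y) • f 0 ≤ f ((x / y) • y + (1 - x / y) • (0:ℝ)) :=
          hc.2 hy (self_mem_Ici : (0:ℝ) ∈ Ici 0) ht0 (by linarith) (by ring)
        simp only [smul_eq_mul, mul_zero, add_zero] at hcomb
        rw [div_mul_cancel₀ _ hy0'.ne'] at hcomb
        -- hcomb : x/y * f y + (1 - x/y) * f 0 ≤ f x
        have h3 : (x / y) * (f y - f x) ≤ (1 - x / y) * (f x - f 0) := by nlinarith [hcomb]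
        -- multiply by y/x : f y - f x ≤ ((y - x)/x) (f x - f 0)
        have h4 : f y - f x ≤ ((y - x) / x) * (f x - f 0) := by
          have hyx' := mul_le_mul_of_nonneg_left h3 (le_of_lt (by positivity : (0:ℝ) < y / x))
          have e1 : (y / x) * ((x / y) * (f y - f x)) = f y - f x := by
            field_simp
          have e2 : (y / x) * ((1 - x / y) * (f x - f 0)) = ((y - x) / x) * (f x - f 0) := by
            field_simp
          rw [e1, e2] at hyx'
          exact hyx'
        have h2 : ((y - x) / x) * (f x - f 0) = (y - x) * L := by
          rw [hL]; field_simp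
        have hmono : f x ≤ f y := hm hx hy hxy.le
        rw [abs_of_nonneg (by linarith), abs_of_nonneg (by linarith)]
        nlinarith [h4, h2, hLnn]
    rw [Metric.continuousWithinAt_iff]
    intro ε hε
    refine ⟨ε / (L + 1), by positivity, fun y hy hd => ?_⟩
    rw [Real.dist_eq] at hd ⊢
    calc |f y - f x| ≤ |y - x| * (L + 1) := key y hy
      _ < (ε / (L + 1)) * (L + 1) := by
          apply mul_lt_mul_of_pos_right hd (by linarith)
      _ = ε := by field_simp

end helperlemmas

/-- The entropic cost `ε ↦ v_ε` is continuous, non-decreasing and concave on `[0,∞)`. -/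
theorem entCost_continuous_monotone_concave {d : ℕ}
    (μm μp : Measure (EuclideanSpace ℝ (Fin d)))
    [IsProbabilityMeasure μm] [IsProbabilityMeasure μp]
    (hXm : IsCompact (msupport μm)) (hXp : IsCompact (msupport μp))
    (c : EuclideanSpace ℝ (Fin d) × EuclideanSpace ℝ (Fin d) → ℝ)
    (hc : ContinuousOn c (msupport μm ×ˢ msupport μp)) :
    ContinuousOn (fun ε : ℝ => (entCost μm μp c ε).toReal) (Set.Ici 0) ∧
    MonotoneOn (fun ε : ℝ => (entCost μm μp c ε).toReal) (Set.Ici 0) ∧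
    ConcaveOn ℝ (Set.Ici 0) (fun ε : ℝ => (entCost μm μp c ε).toReal) := by
  classical
  have hKclosed : IsClosed (msupport μm ×ˢ msupport μp) :=
    (msupport_closed μm).prod (msupport_closed μp)
  obtain ⟨M₀, hM₀⟩ := (hXm.prod hXp).exists_bound_of_continuousOn hc
  have habs : ∀ p ∈ msupport μm ×ˢ msupport μp, |c p| ≤ M₀ := fun p hp => by
    simpa [Real.norm_eq_abs] using hM₀ p hp
  set S : ℝ → Set EReal := fun ε => {v : EReal | ∃ γ : Measure (EuclideanSpace ℝ (Fin d) × EuclideanSpace ℝ (Fin d)),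
    IsProbabilityMeasure γ ∧ γ.fst = μm ∧ γ.snd = μp ∧
    v = ((∫ p, c p ∂γ : ℝ) : EReal) + (ε : EReal) * Ent γ (μm.prod μp)} with hSdef
  have hEC : ∀ ε : ℝ, entCost μm μp c ε = sInf (S ε) := fun _ => rfl
  have hIB : ∀ γ : Measure (EuclideanSpace ℝ (Fin d) × EuclideanSpace ℝ (Fin d)), IsProbabilityMeasure γ → γ.fst = μm → γ.snd = μp →
      Integrable c γ ∧ |∫ p, c p ∂γ| ≤ M₀ := by
    intro γ hγ hf hs
    haveI := hγ
    exact integrable_and_bound hKclosed (coupling_conc γ hf hs) hc habs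
  have haux : ∀ ε : ℝ, 0 ≤ ε → (0 : EReal) ≤ (ε : EReal) * ⊤ := by
    intro ε hε
    rcases eq_or_lt_of_le hε with h0 | h0
    · rw [← h0, EReal.coe_zero, zero_mul]
    · rw [EReal.coe_mul_top_of_pos h0]; exact le_top
  have hmulnn : ∀ ε : ℝ, 0 ≤ ε → ∀ γ : Measure (EuclideanSpace ℝ (Fin d) × EuclideanSpace ℝ (Fin d)), IsProbabilityMeasure γ →
      (0 : EReal) ≤ (ε : EReal) * Ent γ (μm.prod μp) := by
    intro ε hε γ hγ
    haveI := hγ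
    rcases ent_nonneg_cases γ (μm.prod μp) with h | ⟨r, hr, h⟩
    · rw [h]; exact haux ε hε
    · rw [h, ← EReal.coe_mul]
      exact_mod_cast mul_nonneg hε hr
  have hmemC0 : ∀ ε : ℝ, ((∫ p, c p ∂(μm.prod μp) : ℝ) : EReal) ∈ S ε := by
    intro ε
    refine ⟨μm.prod μp, inferInstance, Measure.fst_prod, Measure.snd_prod, ?_⟩
    rw [ent_self_zero, mul_zero, add_zero]
  have hlb : ∀ ε : ℝ, 0 ≤ ε → ∀ v ∈ S ε, ((-M₀ : ℝ) : EReal) ≤ v := by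
    intro ε hε v hv
    obtain ⟨γ, hγ, hf, hs, rfl⟩ := hv
    have h1 : ((-M₀ : ℝ) : EReal) ≤ ((∫ p, c p ∂γ : ℝ) : EReal) := by
      exact_mod_cast (abs_le.1 (hIB γ hγ hf hs).2).1
    calc ((-M₀ : ℝ) : EReal) = ((-M₀ : ℝ) : EReal) + 0 := (add_zero _).symm
      _ ≤ _ := add_le_add h1 (hmulnn ε hε γ hγ)
  have hlbInf : ∀ ε : ℝ, 0 ≤ ε → ((-M₀ : ℝ) : EReal) ≤ sInf (S ε) :=
    fun ε hε => le_sInf (hlb ε hε)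
  have hubInf : ∀ ε : ℝ, sInf (S ε) ≤ ((∫ p, c p ∂(μm.prod μp) : ℝ) : EReal) :=
    fun ε => sInf_le (hmemC0 ε)
  have hneb : ∀ ε : ℝ, 0 ≤ ε → sInf (S ε) ≠ ⊥ :=
    fun ε hε => ((EReal.bot_lt_coe _).trans_le (hlbInf ε hε)).ne'
  have hnet : ∀ ε : ℝ, sInf (S ε) ≠ ⊤ :=
    fun ε => ((hubInf ε).trans_lt (EReal.coe_lt_top _)).ne
  set f : ℝ → ℝ := fun ε => (entCost μm μp c ε).toReal with hfdef
  have hfcoe : ∀ ε : ℝ, 0 ≤ ε → ((f ε : ℝ) : EReal) = sInf (S ε) := by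
    intro ε hε
    rw [hfdef]
    show ((entCost μm μp c ε).toReal : EReal) = sInf (S ε)
    rw [hEC ε]
    exact EReal.coe_toReal (hnet ε) (hneb ε hε)
  have hfle : ∀ ε : ℝ, 0 ≤ ε → ∀ v ∈ S ε, ((f ε : ℝ) : EReal) ≤ v := by
    intro ε hε v hv
    rw [hfcoe ε hε]
    exact sInf_le hv
  -- monotonicity at the EReal level
  have hmonoE : ∀ ε₁ ε₂ : ℝ, 0 ≤ ε₁ → ε₁ ≤ ε₂ → sInf (S ε₁) ≤ sInf (S ε₂) := by
    intro ε₁ ε₂ h1 h12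
    refine le_sInf fun v hv => ?_
    obtain ⟨γ, hγ, hmf, hms, rfl⟩ := hv
    haveI := hγ
    have hmem : ((∫ p, c p ∂γ : ℝ) : EReal) + (ε₁ : EReal) * Ent γ (μm.prod μp) ∈ S ε₁ :=
      ⟨γ, hγ, hmf, hms, rfl⟩
    refine (sInf_le hmem).trans (add_le_add le_rfl ?_)
    rcases ent_nonneg_cases γ (μm.prod μp) with h | ⟨r, hr, h⟩
    · rw [h]
      rcases eq_or_lt_of_le h1 with h0 | h0
      · rw [← h0, EReal.coe_zero, zero_mul]
        exact haux ε₂ (h1.trans h12)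
      · rw [EReal.coe_mul_top_of_pos h0, EReal.coe_mul_top_of_pos (h0.trans_le h12)]
    · rw [h, ← EReal.coe_mul, ← EReal.coe_mul]
      exact_mod_cast mul_le_mul_of_nonneg_right h12 hr
  have hmono : MonotoneOn f (Ici 0) := by
    intro a ha b hb hab
    have h := hmonoE a b ha hab
    rw [hfdef]
    exact EReal.toReal_le_toReal (by rw [hEC, hEC]; exact h)
      (by rw [hEC]; exact hneb a ha) (by rw [hEC]; exact hnet b)
  -- concavity
  have hconc : ConcaveOn ℝ (Ici 0) f := by
    refine ⟨convex_Ici 0, ?_⟩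
    intro x hx y hy a b ha hb hab
    simp only [smul_eq_mul]
    have hx0 : (0:ℝ) ≤ x := hx
    have hy0 : (0:ℝ) ≤ y := hy
    have hcombo : (0:ℝ) ≤ a * x + b * y := by positivity
    have hE2 : ((a * f x + b * f y : ℝ) : EReal) ≤ sInf (S (a * x + b * y)) := by
      refine le_sInf fun v hv => ?_
      obtain ⟨γ, hγ, hmf, hms, rfl⟩ := hv
      haveI := hγ
      have hc0 : ((∫ p, c p ∂γ : ℝ) : EReal) ∈ S 0 :=
        ⟨γ, hγ, hmf, hms, by rw [EReal.coe_zero, zero_mul, add_zero]⟩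
      have hf0cγ : f 0 ≤ ∫ p, c p ∂γ := by exact_mod_cast hfle 0 le_rfl _ hc0
      rcases ent_nonneg_cases γ (μm.prod μp) with h | ⟨r, hr, h⟩
      · rw [h]
        rcases eq_or_lt_of_le hcombo with h0 | h0
        · rw [← h0, EReal.coe_zero, zero_mul, add_zero, EReal.coe_le_coe_iff]
          have haxby : a * x = 0 ∧ b * y = 0 := by
            constructor <;> nlinarith [mul_nonneg ha hx0, mul_nonneg hb hy0]
          have h1 : a * f x ≤ a * (∫ p, c p ∂γ) := by
            rcases eq_or_lt_of_le ha with ha0 | ha0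
            · rw [← ha0, zero_mul, zero_mul]
            · have hxz : x = 0 := by
                rcases mul_eq_zero.1 haxby.1 with h' | h'
                · exact absurd h'.symm ha0.ne
                · exact h'
              have hfx : f x = f 0 := by rw [hxz]
              rw [hfx]
              exact mul_le_mul_of_nonneg_left hf0cγ ha
          have h2 : b * f y ≤ b * (∫ p, c p ∂γ) := by
            rcases eq_or_lt_of_le hb with hb0 | hb0
            · rw [← hb0, zero_mul, zero_mul]
            · have hyz : y = 0 := by
                rcases mul_eq_zero.1 haxby.2 with h' | h'
                · exact absurd h'.symm hb0.ne
                · exact h'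
              have hfy : f y = f 0 := by rw [hyz]
              rw [hfy]
              exact mul_le_mul_of_nonneg_left hf0cγ hb
          have hsum : a * (∫ p, c p ∂γ) + b * (∫ p, c p ∂γ) = ∫ p, c p ∂γ := by
            rw [← add_mul, hab, one_mul]
          linarith
        · rw [EReal.coe_mul_top_of_pos h0, EReal.coe_add_top]
          exact le_top
      · rw [h, ← EReal.coe_mul, ← EReal.coe_add, EReal.coe_le_coe_iff]
        have h1 : f x ≤ (∫ p, c p ∂γ) + x * r := by
          have hm : ((∫ p, c p ∂γ + x * r : ℝ) : EReal) ∈ S x :=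
            ⟨γ, hγ, hmf, hms, by rw [h, ← EReal.coe_mul, ← EReal.coe_add]⟩
          exact_mod_cast hfle x hx0 _ hm
        have h2 : f y ≤ (∫ p, c p ∂γ) + y * r := by
          have hm : ((∫ p, c p ∂γ + y * r : ℝ) : EReal) ∈ S y :=
            ⟨γ, hγ, hmf, hms, by rw [h, ← EReal.coe_mul, ← EReal.coe_add]⟩
          exact_mod_cast hfle y hy0 _ hm
        have h1' := mul_le_mul_of_nonneg_left h1 ha
        have h2' := mul_le_mul_of_nonneg_left h2 hb
        have hexp : a * ((∫ p, c p ∂γ) + x * r) + b * ((∫ p, c p ∂γ) + y * r)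
            = (a + b) * (∫ p, c p ∂γ) + (a * x + b * y) * r := by ring
        rw [hab, one_mul] at hexp
        linarith
    rw [← hfcoe _ hcombo] at hE2
    exact_mod_cast hE2
  -- right continuity input at 0
  have hright : ∀ δ : ℝ, 0 < δ → ∃ ε₀ > 0, ∀ ε ∈ Icc 0 ε₀, |f ε - f 0| ≤ δ := by
    intro δ hδ
    have hlt : sInf (S 0) < ((f 0 + δ / 4 : ℝ) : EReal) := by
      rw [← hfcoe 0 le_rfl]
      exact_mod_cast (by linarith : f 0 < f 0 + δ / 4)
    obtain ⟨v, hvS, hvlt⟩ := sInf_lt_iff.1 hlt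
    obtain ⟨γ, hγ, hmf, hms, rfl⟩ := hvS
    haveI := hγ
    rw [EReal.coe_zero, zero_mul, add_zero, EReal.coe_lt_coe_iff] at hvlt
    obtain ⟨γ', hγ'p, hf', hs', hEnt', hcost'⟩ :=
      block_approx μm μp hXm hXp c hc γ hmf hms (show (0:ℝ) < δ / 4 by linarith)
    haveI := hγ'p
    rcases ent_nonneg_cases γ' (μm.prod μp) with h | ⟨r, hr, h⟩
    · exact absurd h hEnt'
    have hkey : ∀ ε : ℝ, 0 ≤ ε → f ε ≤ (∫ p, c p ∂γ') + ε * r := by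
      intro ε hε
      have hm : ((∫ p, c p ∂γ' + ε * r : ℝ) : EReal) ∈ S ε :=
        ⟨γ', hγ'p, hf', hs', by rw [h, ← EReal.coe_mul, ← EReal.coe_add]⟩
      exact_mod_cast hfle ε hε _ hm
    refine ⟨δ / (2 * (r + 1)), by positivity, ?_⟩
    rintro ε ⟨hε0, hε1⟩
    have hm0 : f 0 ≤ f ε := hmono self_mem_Ici hε0 hε0
    have hεr : ε * r ≤ δ / 2 := by
      have h1 : ε * r ≤ (δ / (2 * (r + 1))) * r := mul_le_mul_of_nonneg_right hε1 hr
      have h2 : (δ / (2 * (r + 1))) * r ≤ δ / 2 := by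
        rw [div_mul_eq_mul_div, div_le_div_iff₀ (by positivity) (by positivity)]
        nlinarith [hδ, hr]
      linarith
    have hup : f ε ≤ f 0 + δ := by
      have := hkey ε hε0
      linarith
    rw [abs_le]
    constructor <;> linarith
  exact ⟨concave_mono_continuousOn hmono hconc hright, hmono, hconc⟩

end
end

section
/- Let μ⁻, μ⁺ be probability measures on ℝ^d, let γ₀ be a coupling of μ⁻ and μ⁺, let δ > 0, and let (A_n)_{n∈ℕ} be a countable Borel partition of ℝ^d with diam(A_n) ≤ δ for every n. Then the block approximation γ^δ := Σ_{i,j} γ₀(A_i × A_j)·(μ⁻|_{A_i}/μ⁻(A_i)) ⊗ (μ⁺|_{A_j}/μ⁺(A_j)) (summing over pairs with μ⁻(A_i) > 0 and μ⁺(A_j) > 0) satisfies: (i) γ^δ is a coupling of μ⁻ and μ⁺ absolutely continuous with respect to μ⁻⊗μ⁺; (ii) Ent(γ^δ | μ⁻⊗μ⁺) ≤ Σ_n μ⁺(A_n)·log(1/μ⁺(A_n)); (iii) there exists a coupling κ of γ₀ and γ^δ concentrated on the set of pairs ((x,y),(x',y')) with |x−x'| ≤ δ and |y−y'| ≤ δ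 (i.e. W_∞(γ₀, γ^δ) ≤ δ). -/
open MeasureTheory Real Set Filter Classical
open scoped ENNReal NNReal Topology

noncomputable section

private lemma ennreal_cancel {a b x : ℝ≥0∞} (ha : a ≠ ∞) (hb : b ≠ ∞)
    (hxa : x ≤ a) (hxb : x ≤ b) : a⁻¹ * b⁻¹ * (x * (a * b)) = x := by
  rcases eq_or_ne a 0 with h0 | h0
  · have : x = 0 := le_antisymm (h0 ▸ hxa) zero_le
    simp [this]
  rcases eq_or_ne b 0 with h1 | h1
  · have : x = 0 := le_antisymm (h1 ▸ hxb) zero_le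
    simp [this]
  calc a⁻¹ * b⁻¹ * (x * (a * b)) = (a⁻¹ * a) * (b⁻¹ * b) * x := by ring
  _ = x := by rw [ENNReal.inv_mul_cancel h0 ha, ENNReal.inv_mul_cancel h1 hb, one_mul, one_mul]

private lemma tsum_collapse {p b : ℕ → ℝ≥0∞} {a m : ℝ≥0∞} (ha : a ≠ ∞) (hb : ∀ j, b j ≠ ∞)
    (hpb : ∀ j, p j ≤ b j) (hpa : ∑' j, p j = a) (hma : m ≤ a) :
    ∑' j, p j * a⁻¹ * (b j)⁻¹ * (m * b j) = m := by
  rcases eq_or_ne a 0 with h0 | h0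
  · have hm : m = 0 := le_antisymm (h0 ▸ hma) zero_le
    simp [hm]
  · have key : ∀ j, p j * a⁻¹ * (b j)⁻¹ * (m * b j) = p j * (a⁻¹ * m) := by
      intro j
      rcases eq_or_ne (b j) 0 with hb0 | hb0
      · have : p j = 0 := le_antisymm (hb0 ▸ hpb j) zero_le
        simp [this]
      · calc p j * a⁻¹ * (b j)⁻¹ * (m * b j) = ((b j)⁻¹ * b j) * (p j * (a⁻¹ * m)) := by ring
        _ = p j * (a⁻¹ * m) := by rw [ENNReal.inv_mul_cancel hb0 (hb j), one_mul]
    rw [tsum_congr key, ENNReal.tsum_mul_right, hpa, ← mul_assoc, ENNReal.mul_inv_cancel h0 ha,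
      one_mul]

private lemma tsum_collapse' {p a : ℕ → ℝ≥0∞} {b m : ℝ≥0∞} (hb : b ≠ ∞) (ha : ∀ i, a i ≠ ∞)
    (hpa : ∀ i, p i ≤ a i) (hpb : ∑' i, p i = b) (hmb : m ≤ b) :
    ∑' i, p i * (a i)⁻¹ * b⁻¹ * (a i * m) = m := by
  rcases eq_or_ne b 0 with h0 | h0
  · have hm : m = 0 := le_antisymm (h0 ▸ hmb) zero_le
    simp [hm]
  · have key : ∀ i, p i * (a i)⁻¹ * b⁻¹ * (a i * m) = p i * (b⁻¹ * m) := by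
      intro i
      rcases eq_or_ne (a i) 0 with ha0 | ha0
      · have : p i = 0 := le_antisymm (ha0 ▸ hpa i) zero_le
        simp [this]
      · calc p i * (a i)⁻¹ * b⁻¹ * (a i * m) = ((a i)⁻¹ * a i) * (p i * (b⁻¹ * m)) := by ring
        _ = p i * (b⁻¹ * m) := by rw [ENNReal.inv_mul_cancel ha0 (ha i), one_mul]
    rw [tsum_congr key, ENNReal.tsum_mul_right, hpb, ← mul_assoc, ENNReal.mul_inv_cancel h0 hb,
      one_mul]

private lemma block_real_bound {a b p : ℝ} (ha : 0 ≤ a)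
    (hp : 0 ≤ p) (hpa : p ≤ a) (hpb : p ≤ b) :
    -(a * b) ≤ p * a⁻¹ * b⁻¹ * Real.log (p * a⁻¹ * b⁻¹) * (a * b) ∧
      p * a⁻¹ * b⁻¹ * Real.log (p * a⁻¹ * b⁻¹) * (a * b) ≤ p * (-Real.log b) := by
  have hb : 0 ≤ b := le_trans hp hpb
  rcases eq_or_lt_of_le hp with hp0 | hp0
  · simp only [← hp0, zero_mul]
    constructor
    · simpa using mul_nonneg ha hb
    · simp
  have ha0 : 0 < a := lt_of_lt_of_le hp0 hpa
  have hb0 : 0 < b := lt_of_lt_of_le hp0 hpb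
  have hsimp : p * a⁻¹ * b⁻¹ * Real.log (p * a⁻¹ * b⁻¹) * (a * b)
      = p * Real.log (p * a⁻¹ * b⁻¹) := by
    field_simp
  have hlog : Real.log (p * a⁻¹ * b⁻¹) = Real.log p - Real.log a - Real.log b := by
    rw [Real.log_mul (by positivity) (by positivity), Real.log_mul (by positivity) (by positivity),
      Real.log_inv, Real.log_inv]
    ring
  rw [hsimp, hlog]
  constructor
  · have h1 : Real.log ((a * b) / p) ≤ (a * b) / p - 1 :=
      Real.log_le_sub_one_of_pos (by positivity)
    rw [Real.log_div (by positivity) (by positivity), Real.log_mul (by positivity) (by positivity)]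
      at h1
    have h2 : p * (Real.log a + Real.log b - Real.log p) ≤ p * ((a * b) / p - 1) :=
      mul_le_mul_of_nonneg_left h1 hp
    have h3 : p * ((a * b) / p) = a * b := by field_simp
    nlinarith
  · have h1 : Real.log p ≤ Real.log a := Real.log_le_log hp0 hpa
    have h2 : p * (Real.log p - Real.log a) ≤ 0 := mul_nonpos_of_nonneg_of_nonpos hp (by linarith)
    nlinarith

private lemma mul_ofReal_neg_log {x : ℝ≥0∞} (hx : x ≠ ∞) :
    x * ENNReal.ofReal (-Real.log x.toReal) = ENNReal.ofReal (Real.negMulLog x.toReal) := by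
  have h : Real.negMulLog x.toReal = x.toReal * (-Real.log x.toReal) := by
    rw [Real.negMulLog]; ring
  rw [h, ENNReal.ofReal_mul ENNReal.toReal_nonneg, ENNReal.ofReal_toReal hx]

/-- **Block approximation**: given a coupling `γ₀` of `μ⁻, μ⁺` and a countable Borel partition
of `ℝ^d` into sets of diameter `≤ δ`, the block approximation `γ^δ` is a coupling of `μ⁻, μ⁺`,
absolutely continuous w.r.t. `μ⁻ ⊗ μ⁺`, with entropy at most `Σ_n μ⁺(A_n) log(1/μ⁺(A_n))`,
and `W_∞(γ₀, γ^δ) ≤ δ`. -/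
theorem block_approximation {d : ℕ}
    (μm μp : Measure (EuclideanSpace ℝ (Fin d)))
    [IsProbabilityMeasure μm] [IsProbabilityMeasure μp]
    (γ0 : Measure (EuclideanSpace ℝ (Fin d) × EuclideanSpace ℝ (Fin d)))
    [IsProbabilityMeasure γ0] (hfst : γ0.fst = μm) (hsnd : γ0.snd = μp)
    (δ : ℝ) (hδ : 0 < δ)
    (A : ℕ → Set (EuclideanSpace ℝ (Fin d)))
    (hmeas : ∀ n, MeasurableSet (A n))
    (hdiam : ∀ n, EMetric.diam (A n) ≤ ENNReal.ofReal δ)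
    (hcover : (⋃ n, A n) = Set.univ)
    (hdisj : Pairwise (Function.onFun Disjoint A))
    (γδ : Measure (EuclideanSpace ℝ (Fin d) × EuclideanSpace ℝ (Fin d)))
    (hγδ : γδ = Measure.sum (fun ij : ℕ × ℕ =>
      (γ0 (A ij.1 ×ˢ A ij.2) * (μm (A ij.1))⁻¹ * (μp (A ij.2))⁻¹) •
        ((μm.restrict (A ij.1)).prod (μp.restrict (A ij.2))))) :
    (γδ.fst = μm ∧ γδ.snd = μp ∧ γδ ≪ μm.prod μp) ∧
    Ent γδ (μm.prod μp)
      ≤ ((∑' n, ENNReal.ofReal (Real.negMulLog ((μp (A n)).toReal)) : ℝ≥0∞) : EReal) ∧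
    ∃ κ : Measure ((EuclideanSpace ℝ (Fin d) × EuclideanSpace ℝ (Fin d))
        × (EuclideanSpace ℝ (Fin d) × EuclideanSpace ℝ (Fin d))),
      IsProbabilityMeasure κ ∧ κ.fst = γ0 ∧ κ.snd = γδ ∧
      κ {q | dist q.1.1 q.2.1 ≤ δ ∧ dist q.1.2 q.2.2 ≤ δ}ᶜ = 0 := by
  -- basic facts
  have hBmeas : ∀ ij : ℕ × ℕ, MeasurableSet (A ij.1 ×ˢ A ij.2) :=
    fun ij => (hmeas _).prod (hmeas _)
  have hBdisj : Pairwise (Function.onFun Disjoint (fun ij : ℕ × ℕ => A ij.1 ×ˢ A ij.2)) := by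
    intro ij kl hne
    by_cases h1 : ij.1 = kl.1
    · have h2 : ij.2 ≠ kl.2 := fun h2 => hne (Prod.ext h1 h2)
      exact Set.disjoint_prod.mpr (Or.inr (hdisj h2))
    · exact Set.disjoint_prod.mpr (Or.inl (hdisj h1))
  have ha_top : ∀ i, μm (A i) ≠ ∞ := fun i => measure_ne_top μm _
  have hb_top : ∀ j, μp (A j) ≠ ∞ := fun j => measure_ne_top μp _
  have hpa : ∀ i j, γ0 (A i ×ˢ A j) ≤ μm (A i) := by
    intro i j
    rw [← hfst, Measure.fst_apply (hmeas i)]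
    exact measure_mono fun z hz => hz.1
  have hpb : ∀ i j, γ0 (A i ×ˢ A j) ≤ μp (A j) := by
    intro i j
    rw [← hsnd, Measure.snd_apply (hmeas j)]
    exact measure_mono fun z hz => hz.2
  have hsumj : ∀ i, ∑' j, γ0 (A i ×ˢ A j) = μm (A i) := by
    intro i
    rw [← measure_iUnion (fun j k hjk => Set.disjoint_prod.mpr (Or.inr (hdisj hjk)))
      (fun j => (hmeas i).prod (hmeas j)), ← Set.prod_iUnion, hcover, Set.prod_univ,
      ← Measure.fst_apply (hmeas i), hfst]
  have hsumi : ∀ j, ∑' i, γ0 (A i ×ˢ A j) = μp (A j) := by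
    intro j
    rw [← measure_iUnion (fun i k hik => Set.disjoint_prod.mpr (Or.inl (hdisj hik)))
      (fun i => (hmeas i).prod (hmeas j)), ← Set.iUnion_prod_const, hcover, Set.univ_prod,
      ← Measure.snd_apply (hmeas j), hsnd]
  have hμmpart : ∀ s : Set (EuclideanSpace ℝ (Fin d)), MeasurableSet s →
      ∑' i, μm (s ∩ A i) = μm s := by
    intro s hs
    rw [← measure_iUnion (fun i k hik =>
        ((hdisj hik).mono Set.inter_subset_right Set.inter_subset_right))
      (fun i => hs.inter (hmeas i)), ← Set.inter_iUnion, hcover, Set.inter_univ]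
  have hμppart : ∀ s : Set (EuclideanSpace ℝ (Fin d)), MeasurableSet s →
      ∑' j, μp (s ∩ A j) = μp s := by
    intro s hs
    rw [← measure_iUnion (fun i k hik =>
        ((hdisj hik).mono Set.inter_subset_right Set.inter_subset_right))
      (fun i => hs.inter (hmeas i)), ← Set.inter_iUnion, hcover, Set.inter_univ]
  -- part (i)
  have hγδfst : γδ.fst = μm := by
    ext s hs
    rw [Measure.fst_apply hs, hγδ, Measure.sum_apply _ (measurable_fst hs)]
    have hterm : ∀ ij : ℕ × ℕ,
        ((γ0 (A ij.1 ×ˢ A ij.2) * (μm (A ij.1))⁻¹ * (μp (A ij.2))⁻¹) •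
          ((μm.restrict (A ij.1)).prod (μp.restrict (A ij.2)))) (Prod.fst ⁻¹' s)
        = γ0 (A ij.1 ×ˢ A ij.2) * (μm (A ij.1))⁻¹ * (μp (A ij.2))⁻¹ *
          (μm (s ∩ A ij.1) * μp (A ij.2)) := by
      intro ij
      rw [Measure.smul_apply, smul_eq_mul, ← Set.prod_univ, Measure.prod_prod,
        Measure.restrict_apply hs, Measure.restrict_apply_univ]
    rw [tsum_congr hterm, ENNReal.tsum_prod']
    rw [tsum_congr (fun i => tsum_collapse (ha_top i) hb_top (fun j => hpb i j) (hsumj i)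
      (measure_mono Set.inter_subset_right))]
    exact hμmpart s hs
  have hγδsnd : γδ.snd = μp := by
    ext s hs
    rw [Measure.snd_apply hs, hγδ, Measure.sum_apply _ (measurable_snd hs)]
    have hterm : ∀ ij : ℕ × ℕ,
        ((γ0 (A ij.1 ×ˢ A ij.2) * (μm (A ij.1))⁻¹ * (μp (A ij.2))⁻¹) •
          ((μm.restrict (A ij.1)).prod (μp.restrict (A ij.2)))) (Prod.snd ⁻¹' s)
        = γ0 (A ij.1 ×ˢ A ij.2) * (μm (A ij.1))⁻¹ * (μp (A ij.2))⁻¹ *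
          (μm (A ij.1) * μp (s ∩ A ij.2)) := by
      intro ij
      rw [Measure.smul_apply, smul_eq_mul, ← Set.univ_prod, Measure.prod_prod,
        Measure.restrict_apply hs, Measure.restrict_apply_univ]
    rw [tsum_congr hterm, ENNReal.tsum_prod', ENNReal.tsum_comm]
    rw [tsum_congr (fun j => tsum_collapse' (hb_top j) ha_top (fun i => hpa i j) (hsumi j)
      (measure_mono Set.inter_subset_right))]
    exact hμppart s hs
  have hac : γδ ≪ μm.prod μp := by
    refine Measure.AbsolutelyContinuous.mk fun s hs h0 => ?_
    rw [hγδ, Measure.sum_apply _ hs]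
    refine ENNReal.tsum_eq_zero.mpr fun ij => ?_
    rw [Measure.smul_apply, smul_eq_mul, Measure.prod_restrict, Measure.restrict_apply hs]
    rw [measure_mono_null Set.inter_subset_left h0, mul_zero]
  refine ⟨⟨hγδfst, hγδsnd, hac⟩, ?_, ?_⟩
  · -- entropy bound
    by_cases hS : (∑' n, ENNReal.ofReal (Real.negMulLog ((μp (A n)).toReal)) : ℝ≥0∞) = ⊤
    · rw [hS, EReal.coe_ennreal_top]
      exact le_top
    have hb1 : ∀ j, (μp (A j)).toReal ≤ 1 := by
      intro j
      have h := ENNReal.toReal_mono ENNReal.one_ne_top (prob_le_one (μ := μp) (s := A j))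
      rwa [ENNReal.toReal_one] at h
    set ρ : EuclideanSpace ℝ (Fin d) × EuclideanSpace ℝ (Fin d) → ℝ≥0∞ := fun z =>
      ∑' ij : ℕ × ℕ, (A ij.1 ×ˢ A ij.2).indicator
        (fun _ => γ0 (A ij.1 ×ˢ A ij.2) * (μm (A ij.1))⁻¹ * (μp (A ij.2))⁻¹) z with hρ
    have hρmeas : Measurable ρ := Measurable.ennreal_tsum fun ij =>
      Measurable.indicator measurable_const (hBmeas ij)
    have hwd : γδ = (μm.prod μp).withDensity ρ := by
      have hρeq : ρ = ∑' ij : ℕ × ℕ, (A ij.1 ×ˢ A ij.2).indicator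
          (fun _ => γ0 (A ij.1 ×ˢ A ij.2) * (μm (A ij.1))⁻¹ * (μp (A ij.2))⁻¹) := by
        funext z
        exact (tsum_apply (Pi.summable.mpr fun _ => ENNReal.summable)).symm
      rw [hρeq, withDensity_tsum fun ij => Measurable.indicator measurable_const (hBmeas ij), hγδ]
      congr 1
      funext ij
      rw [withDensity_indicator (hBmeas ij), withDensity_const, Measure.prod_restrict]
    have hrn : γδ.rnDeriv (μm.prod μp) =ᵐ[μm.prod μp] ρ := by
      rw [hwd]
      exact Measure.rnDeriv_withDensity (μm.prod μp) hρmeas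
    have hρ_on : ∀ (ij : ℕ × ℕ), ∀ z ∈ A ij.1 ×ˢ A ij.2,
        ρ z = γ0 (A ij.1 ×ˢ A ij.2) * (μm (A ij.1))⁻¹ * (μp (A ij.2))⁻¹ := by
      intro ij z hz
      simp only [hρ]
      rw [tsum_eq_single ij (fun kl hkl => Set.indicator_of_notMem (fun hz' =>
        Set.disjoint_left.mp (hBdisj hkl) hz' hz) _)]
      exact Set.indicator_of_mem hz _
    have hBunion : ⋃ ij : ℕ × ℕ, A ij.1 ×ˢ A ij.2 = Set.univ := by
      rw [Set.iUnion_prod A A, hcover, Set.univ_prod_univ]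
    have hbound : ∀ ij : ℕ × ℕ, -((μm (A ij.1)).toReal * (μp (A ij.2)).toReal) ≤ ((γ0 (A ij.1 ×ˢ A ij.2) * (μm (A ij.1))⁻¹ * (μp (A ij.2))⁻¹).toReal * Real.log (γ0 (A ij.1 ×ˢ A ij.2) * (μm (A ij.1))⁻¹ * (μp (A ij.2))⁻¹).toReal * ((μm (A ij.1)).toReal * (μp (A ij.2)).toReal)) ∧ ((γ0 (A ij.1 ×ˢ A ij.2) * (μm (A ij.1))⁻¹ * (μp (A ij.2))⁻¹).toReal * Real.log (γ0 (A ij.1 ×ˢ A ij.2) * (μm (A ij.1))⁻¹ * (μp (A ij.2))⁻¹).toReal * ((μm (A ij.1)).toReal * (μp (A ij.2)).toReal)) ≤ ((γ0 (A ij.1 ×ˢ A ij.2)).toReal * (-Real.log ((μp (A ij.2)).toReal))) := by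
      intro ij
      have hct : (γ0 (A ij.1 ×ˢ A ij.2) * (μm (A ij.1))⁻¹ * (μp (A ij.2))⁻¹).toReal
          = (γ0 (A ij.1 ×ˢ A ij.2)).toReal * ((μm (A ij.1)).toReal)⁻¹ *
            ((μp (A ij.2)).toReal)⁻¹ := by
        rw [ENNReal.toReal_mul, ENNReal.toReal_mul, ENNReal.toReal_inv, ENNReal.toReal_inv]
      rw [hct]
      exact block_real_bound ENNReal.toReal_nonneg ENNReal.toReal_nonneg
        (ENNReal.toReal_mono (ha_top ij.1) (hpa ij.1 ij.2))
        (ENNReal.toReal_mono (hb_top ij.2) (hpb ij.1 ij.2))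
    have hu : ∀ ij : ℕ × ℕ, 0 ≤ ((γ0 (A ij.1 ×ˢ A ij.2)).toReal * (-Real.log ((μp (A ij.2)).toReal))) :=
      fun ij => mul_nonneg ENNReal.toReal_nonneg
        (neg_nonneg.mpr (Real.log_nonpos ENNReal.toReal_nonneg (hb1 ij.2)))
    have hUsum : ∑' ij : ℕ × ℕ, ENNReal.ofReal ((γ0 (A ij.1 ×ˢ A ij.2)).toReal * (-Real.log ((μp (A ij.2)).toReal))) = (∑' n, ENNReal.ofReal (Real.negMulLog ((μp (A n)).toReal)) : ℝ≥0∞) := by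
      rw [ENNReal.tsum_prod', ENNReal.tsum_comm]
      refine tsum_congr fun j => ?_
      have h1 : ∀ i : ℕ, ENNReal.ofReal
            ((γ0 (A i ×ˢ A j)).toReal * (-Real.log ((μp (A j)).toReal)))
          = γ0 (A i ×ˢ A j) * ENNReal.ofReal (-Real.log ((μp (A j)).toReal)) := by
        intro i
        rw [ENNReal.ofReal_mul ENNReal.toReal_nonneg,
          ENNReal.ofReal_toReal (measure_ne_top γ0 _)]
      rw [tsum_congr h1, ENNReal.tsum_mul_right, hsumi j, mul_ofReal_neg_log (hb_top j)]
    have hsum_b : ∑' j, μp (A j) = 1 := by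
      rw [← measure_iUnion hdisj hmeas, hcover, measure_univ]
    have hab_sum : ∑' ij : ℕ × ℕ, μm (A ij.1) * μp (A ij.2) = 1 := by
      rw [ENNReal.tsum_prod']
      calc ∑' i, ∑' j, μm (A i) * μp (A j) = ∑' i, μm (A i) * ∑' j, μp (A j) :=
            tsum_congr fun i => ENNReal.tsum_mul_left
      _ = 1 := by
          rw [hsum_b]
          simp only [mul_one]
          rw [← measure_iUnion hdisj hmeas, hcover, measure_univ]
    have habs_sum : ∑' ij : ℕ × ℕ, ENNReal.ofReal |((γ0 (A ij.1 ×ˢ A ij.2) * (μm (A ij.1))⁻¹ * (μp (A ij.2))⁻¹).toReal * Real.log (γ0 (A ij.1 ×ˢ A ij.2) * (μm (A ij.1))⁻¹ * (μp (A ij.2))⁻¹).toReal * ((μm (A ij.1)).toReal * (μp (A ij.2)).toReal))| ≠ ∞ := by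
      have hle : ∀ ij : ℕ × ℕ, ENNReal.ofReal |((γ0 (A ij.1 ×ˢ A ij.2) * (μm (A ij.1))⁻¹ * (μp (A ij.2))⁻¹).toReal * Real.log (γ0 (A ij.1 ×ˢ A ij.2) * (μm (A ij.1))⁻¹ * (μp (A ij.2))⁻¹).toReal * ((μm (A ij.1)).toReal * (μp (A ij.2)).toReal))|
          ≤ μm (A ij.1) * μp (A ij.2) + ENNReal.ofReal ((γ0 (A ij.1 ×ˢ A ij.2)).toReal * (-Real.log ((μp (A ij.2)).toReal))) := by
        intro ij
        have h := hbound ij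
        have hab : (0:ℝ) ≤ (μm (A ij.1)).toReal * (μp (A ij.2)).toReal :=
          mul_nonneg ENNReal.toReal_nonneg ENNReal.toReal_nonneg
        have habs : |((γ0 (A ij.1 ×ˢ A ij.2) * (μm (A ij.1))⁻¹ * (μp (A ij.2))⁻¹).toReal * Real.log (γ0 (A ij.1 ×ˢ A ij.2) * (μm (A ij.1))⁻¹ * (μp (A ij.2))⁻¹).toReal * ((μm (A ij.1)).toReal * (μp (A ij.2)).toReal))| ≤ (μm (A ij.1)).toReal * (μp (A ij.2)).toReal + ((γ0 (A ij.1 ×ˢ A ij.2)).toReal * (-Real.log ((μp (A ij.2)).toReal))) := by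
          rw [abs_le]
          constructor
          · have := hu ij
            linarith [h.1]
          · linarith [h.2]
        calc ENNReal.ofReal |((γ0 (A ij.1 ×ˢ A ij.2) * (μm (A ij.1))⁻¹ * (μp (A ij.2))⁻¹).toReal * Real.log (γ0 (A ij.1 ×ˢ A ij.2) * (μm (A ij.1))⁻¹ * (μp (A ij.2))⁻¹).toReal * ((μm (A ij.1)).toReal * (μp (A ij.2)).toReal))|
            ≤ ENNReal.ofReal ((μm (A ij.1)).toReal * (μp (A ij.2)).toReal + ((γ0 (A ij.1 ×ˢ A ij.2)).toReal * (-Real.log ((μp (A ij.2)).toReal)))) :=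
              ENNReal.ofReal_le_ofReal habs
        _ ≤ ENNReal.ofReal ((μm (A ij.1)).toReal * (μp (A ij.2)).toReal)
              + ENNReal.ofReal ((γ0 (A ij.1 ×ˢ A ij.2)).toReal * (-Real.log ((μp (A ij.2)).toReal))) := ENNReal.ofReal_add_le
        _ = μm (A ij.1) * μp (A ij.2) + ENNReal.ofReal ((γ0 (A ij.1 ×ˢ A ij.2)).toReal * (-Real.log ((μp (A ij.2)).toReal))) := by
              rw [ENNReal.ofReal_mul ENNReal.toReal_nonneg,
                ENNReal.ofReal_toReal (ha_top ij.1), ENNReal.ofReal_toReal (hb_top ij.2)]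
      refine ne_top_of_le_ne_top ?_ (ENNReal.tsum_le_tsum hle)
      rw [ENNReal.tsum_add, hab_sum, hUsum]
      exact ENNReal.add_ne_top.mpr ⟨ENNReal.one_ne_top, hS⟩
    have hfmeas : Measurable fun z => (ρ z).toReal * Real.log (ρ z).toReal :=
      hρmeas.ennreal_toReal.mul (Real.measurable_log.comp hρmeas.ennreal_toReal)
    have hlint : ∫⁻ z, ↑‖(ρ z).toReal * Real.log (ρ z).toReal‖₊ ∂(μm.prod μp)
        = ∑' ij : ℕ × ℕ, ENNReal.ofReal |((γ0 (A ij.1 ×ˢ A ij.2) * (μm (A ij.1))⁻¹ * (μp (A ij.2))⁻¹).toReal * Real.log (γ0 (A ij.1 ×ˢ A ij.2) * (μm (A ij.1))⁻¹ * (μp (A ij.2))⁻¹).toReal * ((μm (A ij.1)).toReal * (μp (A ij.2)).toReal))| := by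
      conv_lhs => rw [← setLIntegral_univ, ← hBunion]
      rw [lintegral_iUnion hBmeas hBdisj]
      refine tsum_congr fun ij => ?_
      rw [setLIntegral_congr_fun (hBmeas ij) (fun z hz => by rw [hρ_on ij z hz]),
        setLIntegral_const, Measure.prod_prod, ← enorm_eq_nnnorm, Real.enorm_eq_ofReal_abs]
      conv_rhs => rw [abs_mul, abs_of_nonneg (mul_nonneg ENNReal.toReal_nonneg
          ENNReal.toReal_nonneg), ENNReal.ofReal_mul (abs_nonneg _),
        ENNReal.ofReal_mul ENNReal.toReal_nonneg,
        ENNReal.ofReal_toReal (ha_top ij.1), ENNReal.ofReal_toReal (hb_top ij.2)]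
    have hInt : Integrable (fun z => (ρ z).toReal * Real.log (ρ z).toReal) (μm.prod μp) := by
      refine ⟨hfmeas.aestronglyMeasurable, ?_⟩
      show (∫⁻ z, ↑‖(ρ z).toReal * Real.log (ρ z).toReal‖₊ ∂(μm.prod μp)) < ∞
      rw [hlint]
      exact lt_top_iff_ne_top.mpr habs_sum
    have hval : ∫ z, (ρ z).toReal * Real.log (ρ z).toReal ∂(μm.prod μp)
        = ∑' ij : ℕ × ℕ, ((γ0 (A ij.1 ×ˢ A ij.2) * (μm (A ij.1))⁻¹ * (μp (A ij.2))⁻¹).toReal * Real.log (γ0 (A ij.1 ×ˢ A ij.2) * (μm (A ij.1))⁻¹ * (μp (A ij.2))⁻¹).toReal * ((μm (A ij.1)).toReal * (μp (A ij.2)).toReal)) := by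
      conv_lhs => rw [← setIntegral_univ, ← hBunion]
      rw [integral_iUnion hBmeas hBdisj (by rw [hBunion]; exact integrableOn_univ.mpr hInt)]
      refine tsum_congr fun ij => ?_
      rw [setIntegral_congr_fun (hBmeas ij) (fun z hz => by rw [hρ_on ij z hz]),
        setIntegral_const, measureReal_def, Measure.prod_prod, smul_eq_mul, ENNReal.toReal_mul]
      ring
    have hSummable_t : Summable fun ij : ℕ × ℕ => ((γ0 (A ij.1 ×ˢ A ij.2) * (μm (A ij.1))⁻¹ * (μp (A ij.2))⁻¹).toReal * Real.log (γ0 (A ij.1 ×ˢ A ij.2) * (μm (A ij.1))⁻¹ * (μp (A ij.2))⁻¹).toReal * ((μm (A ij.1)).toReal * (μp (A ij.2)).toReal)) := by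
      refine Summable.of_abs ?_
      exact (ENNReal.summable_toReal habs_sum).congr
        fun ij => ENNReal.toReal_ofReal (abs_nonneg _)
    have hSummable_u : Summable fun ij : ℕ × ℕ => ((γ0 (A ij.1 ×ˢ A ij.2)).toReal * (-Real.log ((μp (A ij.2)).toReal))) := by
      have h := ENNReal.summable_toReal (by rw [hUsum]; exact hS)
      exact h.congr fun ij => ENNReal.toReal_ofReal (hu ij)
    have hts : ∑' ij : ℕ × ℕ, ((γ0 (A ij.1 ×ˢ A ij.2) * (μm (A ij.1))⁻¹ * (μp (A ij.2))⁻¹).toReal * Real.log (γ0 (A ij.1 ×ˢ A ij.2) * (μm (A ij.1))⁻¹ * (μp (A ij.2))⁻¹).toReal * ((μm (A ij.1)).toReal * (μp (A ij.2)).toReal)) ≤ ((∑' n, ENNReal.ofReal (Real.negMulLog ((μp (A n)).toReal)) : ℝ≥0∞)).toReal := by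
      have h2 := Summable.tsum_le_tsum (fun ij => (hbound ij).2) hSummable_t hSummable_u
      have h3 : ∑' ij : ℕ × ℕ, ((γ0 (A ij.1 ×ˢ A ij.2)).toReal * (-Real.log ((μp (A ij.2)).toReal))) = ((∑' n, ENNReal.ofReal (Real.negMulLog ((μp (A n)).toReal)) : ℝ≥0∞)).toReal := by
        rw [← hUsum, ENNReal.tsum_toReal_eq fun ij => ENNReal.ofReal_ne_top]
        exact tsum_congr fun ij => (ENNReal.toReal_ofReal (hu ij)).symm
      linarith
    have hcond : γδ ≪ μm.prod μp ∧ Integrable (fun x =>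
        ((γδ.rnDeriv (μm.prod μp)) x).toReal * Real.log ((γδ.rnDeriv (μm.prod μp)) x).toReal)
        (μm.prod μp) := by
      refine ⟨hac, hInt.congr ?_⟩
      filter_upwards [hrn] with z hz
      rw [hz]
    simp only [Ent]
    rw [if_pos hcond]
    have hieq : ∫ x, ((γδ.rnDeriv (μm.prod μp)) x).toReal *
        Real.log ((γδ.rnDeriv (μm.prod μp)) x).toReal ∂(μm.prod μp)
        = ∑' ij : ℕ × ℕ, ((γ0 (A ij.1 ×ˢ A ij.2) * (μm (A ij.1))⁻¹ * (μp (A ij.2))⁻¹).toReal * Real.log (γ0 (A ij.1 ×ˢ A ij.2) * (μm (A ij.1))⁻¹ * (μp (A ij.2))⁻¹).toReal * ((μm (A ij.1)).toReal * (μp (A ij.2)).toReal)) := by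
      rw [← hval]
      refine integral_congr_ae ?_
      filter_upwards [hrn] with z hz
      rw [hz]
    rw [hieq]
    have hcoe : (((∑' n, ENNReal.ofReal (Real.negMulLog ((μp (A n)).toReal)) : ℝ≥0∞) : ℝ≥0∞) : EReal) = ((((∑' n, ENNReal.ofReal (Real.negMulLog ((μp (A n)).toReal)) : ℝ≥0∞)).toReal : ℝ) : EReal) := by
      conv_lhs => rw [← ENNReal.ofReal_toReal hS]
      rw [EReal.coe_ennreal_ofReal, max_eq_left ENNReal.toReal_nonneg]
    rw [hcoe]
    exact EReal.coe_le_coe_iff.mpr hts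
  -- part (iii)
  · set N : Set ((EuclideanSpace ℝ (Fin d) × EuclideanSpace ℝ (Fin d))
        × (EuclideanSpace ℝ (Fin d) × EuclideanSpace ℝ (Fin d))) :=
      {q | dist q.1.1 q.2.1 ≤ δ ∧ dist q.1.2 q.2.2 ≤ δ} with hN
    have hNmeas : MeasurableSet N := by
      apply MeasurableSet.inter
      · exact measurableSet_le ((measurable_fst.comp measurable_fst).dist
          (measurable_fst.comp measurable_snd)) measurable_const
      · exact measurableSet_le ((measurable_snd.comp measurable_fst).dist
          (measurable_snd.comp measurable_snd)) measurable_const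
    set κ : Measure ((EuclideanSpace ℝ (Fin d) × EuclideanSpace ℝ (Fin d))
        × (EuclideanSpace ℝ (Fin d) × EuclideanSpace ℝ (Fin d))) :=
      Measure.sum (fun ij : ℕ × ℕ => ((μm (A ij.1))⁻¹ * (μp (A ij.2))⁻¹) •
        ((γ0.restrict (A ij.1 ×ˢ A ij.2)).prod
          ((μm.restrict (A ij.1)).prod (μp.restrict (A ij.2))))) with hκ
    have hγ0part : ∀ s, MeasurableSet s → ∑' ij : ℕ × ℕ, γ0 (s ∩ (A ij.1 ×ˢ A ij.2)) = γ0 s := by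
      intro s hs
      rw [← measure_iUnion (fun ij kl hne =>
          ((hBdisj hne).mono Set.inter_subset_right Set.inter_subset_right))
        (fun ij => hs.inter (hBmeas ij)), ← Set.inter_iUnion]
      rw [Set.iUnion_prod A A, hcover, Set.univ_prod_univ, Set.inter_univ]
    have hκfst : κ.fst = γ0 := by
      ext s hs
      rw [Measure.fst_apply hs, hκ, Measure.sum_apply _ (measurable_fst hs)]
      have hterm : ∀ ij : ℕ × ℕ,
          (((μm (A ij.1))⁻¹ * (μp (A ij.2))⁻¹) •
            ((γ0.restrict (A ij.1 ×ˢ A ij.2)).prod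
              ((μm.restrict (A ij.1)).prod (μp.restrict (A ij.2))))) (Prod.fst ⁻¹' s)
          = γ0 (s ∩ (A ij.1 ×ˢ A ij.2)) := by
        intro ij
        rw [Measure.smul_apply, smul_eq_mul, ← Set.prod_univ, Measure.prod_prod,
          Measure.restrict_apply hs, ← Set.univ_prod_univ,
          Measure.prod_prod, Measure.restrict_apply_univ, Measure.restrict_apply_univ]
        exact ennreal_cancel (ha_top ij.1) (hb_top ij.2)
          (le_trans (measure_mono Set.inter_subset_right) (hpa ij.1 ij.2))
          (le_trans (measure_mono Set.inter_subset_right) (hpb ij.1 ij.2))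
      rw [tsum_congr hterm]
      exact hγ0part s hs
    have hκsnd : κ.snd = γδ := by
      ext s hs
      rw [Measure.snd_apply hs, hκ, Measure.sum_apply _ (measurable_snd hs), hγδ,
        Measure.sum_apply _ hs]
      refine tsum_congr fun ij => ?_
      rw [Measure.smul_apply, smul_eq_mul, ← Set.univ_prod, Measure.prod_prod,
        Measure.restrict_apply_univ, Measure.smul_apply, smul_eq_mul]
      ring
    have hκuniv : κ Set.univ = 1 := by
      have h := congrArg (fun ν : Measure (EuclideanSpace ℝ (Fin d) × EuclideanSpace ℝ (Fin d))
        => ν Set.univ) hκfst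
      simp only [Measure.fst_apply MeasurableSet.univ, Set.preimage_univ] at h
      rw [h, measure_univ]
    have hsub : ∀ ij : ℕ × ℕ, (A ij.1 ×ˢ A ij.2) ×ˢ (A ij.1 ×ˢ A ij.2) ⊆ N := by
      rintro ⟨i, j⟩ ⟨q1, q2⟩ ⟨⟨h11, h12⟩, h21, h22⟩
      constructor
      · have h := le_trans (EMetric.edist_le_diam_of_mem h11 h21) (hdiam i)
        rw [edist_dist] at h
        exact (ENNReal.ofReal_le_ofReal_iff hδ.le).mp h
      · have h := le_trans (EMetric.edist_le_diam_of_mem h12 h22) (hdiam j)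
        rw [edist_dist] at h
        exact (ENNReal.ofReal_le_ofReal_iff hδ.le).mp h
    refine ⟨κ, ⟨hκuniv⟩, hκfst, hκsnd, ?_⟩
    rw [hκ, Measure.sum_apply _ hNmeas.compl]
    refine ENNReal.tsum_eq_zero.mpr fun ij => ?_
    rw [Measure.smul_apply, smul_eq_mul]
    have hm0 : ((μm.restrict (A ij.1)).prod (μp.restrict (A ij.2))) (A ij.1 ×ˢ A ij.2)ᶜ = 0 := by
      rw [Set.compl_prod_eq_union]
      refine measure_union_null ?_ ?_
      · rw [Measure.prod_prod, Measure.restrict_apply (hmeas ij.1).compl,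
          Set.compl_inter_self, measure_empty, zero_mul]
      · rw [Measure.prod_prod, Measure.restrict_apply (hmeas ij.2).compl,
          Set.compl_inter_self, measure_empty, mul_zero]
    have h0 : ((γ0.restrict (A ij.1 ×ˢ A ij.2)).prod
        ((μm.restrict (A ij.1)).prod (μp.restrict (A ij.2)))) Nᶜ = 0 := by
      refine measure_mono_null (Set.compl_subset_compl.mpr (hsub ij)) ?_
      rw [Set.compl_prod_eq_union]
      refine measure_union_null ?_ ?_
      · rw [Measure.prod_prod, Measure.restrict_apply (hBmeas ij).compl,
          Set.compl_inter_self, measure_empty, zero_mul]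
      · rw [Measure.prod_prod, hm0, mul_zero]
    rw [h0, mul_zero]
end
end

section
/- Let μ⁻ = μ⁺ be the Lebesgue measure restricted to [0,1] ⊆ ℝ and let c(x,y) = |x−y|. Then v_0 = 0 and for every ε > 0: v_ε ≥ −ε·log(2ε); in particular v_ε ≥ v_0 + ε·log(1/ε) − ε·log 2, so the rate ε·log(1/ε) (with constant 1 = d, not d/2) is attained for this Lipschitz cost. -/
open MeasureTheory Real Set Filter Classical
open scoped ENNReal NNReal Topology

noncomputable section

instance muProb : IsProbabilityMeasure (volume.restrict (Set.Icc (0 : ℝ) 1)) :=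
  ⟨by simp [Real.volume_Icc]⟩

lemma mul_log_ge {r h : ℝ} (hr : 0 ≤ r) (hh : 0 < h) :
    r * Real.log h + r - h ≤ r * Real.log r := by
  rcases hr.eq_or_lt with h0 | h0
  · simp [← h0]; linarith
  · have key := Real.log_le_sub_one_of_pos (div_pos hh h0)
    rw [Real.log_div hh.ne' h0.ne'] at key
    have h2 : r * (Real.log h - Real.log r) ≤ r * (h / r - 1) :=
      mul_le_mul_of_nonneg_left key h0.le
    have h3 : r * (h / r - 1) = h - r := by field_simp
    nlinarith

lemma int_exp_aff {c : ℝ} (hc : c ≠ 0) (t a b : ℝ) :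
    ∫ y in a..b, Real.exp ((y - t) / c)
      = c * (Real.exp ((b - t) / c) - Real.exp ((a - t) / c)) := by
  have h1 : ∀ y : ℝ, Real.exp ((y - t) / c) = (fun z => Real.exp (z - t / c)) (y / c) := by
    intro y; simp [sub_div]
  simp_rw [h1]
  rw [intervalIntegral.integral_comp_div (fun z => Real.exp (z - t / c)) hc]
  rw [intervalIntegral.integral_comp_sub_right (fun z => Real.exp z) (t / c)]
  rw [integral_exp]
  simp [smul_eq_mul, sub_div]

lemma inner_le {ε : ℝ} (hε : 0 < ε) {x : ℝ} (hx : x ∈ Set.Icc (0:ℝ) 1) :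
    ∫ y in Set.Icc (0:ℝ) 1, Real.exp (-|x - y| / ε) ≤ 2 * ε := by
  obtain ⟨hx0, hx1⟩ := hx
  have hcont : Continuous fun y : ℝ => Real.exp (-|x - y| / ε) := by
    continuity
  have hset : ∫ y in Set.Icc (0:ℝ) 1, Real.exp (-|x - y| / ε)
      = ∫ y in (0:ℝ)..1, Real.exp (-|x - y| / ε) := by
    rw [intervalIntegral.integral_of_le zero_le_one, integral_Icc_eq_integral_Ioc]
  have hsplit : (∫ y in (0:ℝ)..x, Real.exp (-|x - y| / ε))
        + ∫ y in x..(1:ℝ), Real.exp (-|x - y| / ε)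
      = ∫ y in (0:ℝ)..1, Real.exp (-|x - y| / ε) := by
    have i1 : IntervalIntegrable (fun y : ℝ => Real.exp (-|x - y| / ε)) volume 0 x :=
      hcont.intervalIntegrable 0 x
    have i2 : IntervalIntegrable (fun y : ℝ => Real.exp (-|x - y| / ε)) volume x 1 :=
      hcont.intervalIntegrable x 1
    exact intervalIntegral.integral_add_adjacent_intervals i1 i2
  have hp1 : ∫ y in (0:ℝ)..x, Real.exp (-|x - y| / ε) ≤ ε := by
    have hcg : ∫ y in (0:ℝ)..x, Real.exp (-|x - y| / ε)
        = ∫ y in (0:ℝ)..x, Real.exp ((y - x) / ε) := by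
      apply intervalIntegral.integral_congr
      intro y hy
      rw [Set.uIcc_of_le hx0] at hy
      have h : |x - y| = x - y := abs_of_nonneg (by linarith [hy.2])
      show Real.exp (-|x - y| / ε) = Real.exp ((y - x) / ε)
      rw [h]; ring_nf
    rw [hcg, int_exp_aff hε.ne' x 0 x]
    have h1 : Real.exp ((x - x) / ε) = 1 := by simp
    have h2 : 0 < Real.exp ((0 - x) / ε) := Real.exp_pos _
    nlinarith
  have hp2 : ∫ y in x..(1:ℝ), Real.exp (-|x - y| / ε) ≤ ε := by
    have hcg : ∫ y in x..(1:ℝ), Real.exp (-|x - y| / ε)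
        = ∫ y in x..(1:ℝ), Real.exp ((y - x) / (-ε)) := by
      apply intervalIntegral.integral_congr
      intro y hy
      rw [Set.uIcc_of_le hx1] at hy
      have : |x - y| = y - x := by
        rw [abs_sub_comm]; exact abs_of_nonneg (by linarith [hy.1])
      show Real.exp (-|x - y| / ε) = Real.exp ((y - x) / -ε)
      rw [this, div_neg, neg_div]
    rw [hcg, int_exp_aff (neg_ne_zero.mpr hε.ne') x x 1]
    have h1 : Real.exp ((x - x) / (-ε)) = 1 := by simp
    have h2 : 0 < Real.exp ((1 - x) / (-ε)) := Real.exp_pos _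
    nlinarith
  rw [hset, ← hsplit]
  linarith

def Q01 : Measure (ℝ × ℝ) :=
  (volume.restrict (Set.Icc (0:ℝ) 1)).prod (volume.restrict (Set.Icc (0:ℝ) 1))

instance : IsProbabilityMeasure Q01 := by unfold Q01; infer_instance

lemma hg_cont {ε : ℝ} : Continuous (fun p : ℝ × ℝ => Real.exp (-|p.1 - p.2| / ε)) := by
  continuity

lemma hg_int {ε : ℝ} (hε : 0 < ε) :
    Integrable (fun p : ℝ × ℝ => Real.exp (-|p.1 - p.2| / ε)) Q01 := by
  refine (integrable_const (1:ℝ)).mono' hg_cont.aestronglyMeasurable (ae_of_all _ fun p => ?_)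
  rw [Real.norm_eq_abs, abs_of_nonneg (Real.exp_pos _).le]
  rw [Real.exp_le_one_iff]
  exact div_nonpos_of_nonpos_of_nonneg (neg_nonpos.mpr (abs_nonneg _)) hε.le

lemma hq_ae : ∀ᵐ p ∂Q01, p ∈ (Set.Icc (0:ℝ) 1) ×ˢ (Set.Icc (0:ℝ) 1) := by
  rw [Q01, Measure.prod_restrict]
  exact ae_restrict_mem (measurableSet_Icc.prod measurableSet_Icc)

lemma hc_ae_le_one : ∀ᵐ p : ℝ × ℝ ∂Q01, |p.1 - p.2| ≤ 1 := by
  filter_upwards [hq_ae] with p hp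
  obtain ⟨⟨h1, h2⟩, ⟨h3, h4⟩⟩ := hp
  rw [abs_sub_le_iff]; constructor <;> linarith

lemma hZ_le {ε : ℝ} (hε : 0 < ε) :
    ∫ p, Real.exp (-|p.1 - p.2| / ε) ∂Q01 ≤ 2 * ε := by
  rw [show Q01 = (volume.restrict (Set.Icc (0:ℝ) 1)).prod (volume.restrict (Set.Icc (0:ℝ) 1))
      from rfl, integral_prod _ (hg_int hε)]
  have h1 : ∫ x in Set.Icc (0:ℝ) 1,
        (∫ y in Set.Icc (0:ℝ) 1, Real.exp (-|x - y| / ε))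
      ≤ ∫ _ in Set.Icc (0:ℝ) 1, (2 * ε) := by
    refine integral_mono_ae ?_ (integrable_const _) ?_
    · exact (hg_int hε).integral_prod_left
    · filter_upwards [ae_restrict_mem measurableSet_Icc] with x hx
      exact inner_le hε hx
  refine h1.trans_eq ?_
  simp

lemma hZ_ge {ε : ℝ} (hε : 0 < ε) :
    Real.exp (-(1/ε)) ≤ ∫ p, Real.exp (-|p.1 - p.2| / ε) ∂Q01 := by
  have h := integral_mono_ae (μ := Q01) (integrable_const (Real.exp (-(1/ε)))) (hg_int hε) ?_
  · simpa using h
  · filter_upwards [hc_ae_le_one] with p hp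
    apply Real.exp_le_exp.mpr
    rw [neg_div, neg_le_neg_iff]
    gcongr

lemma main_bound {ε : ℝ} (hε : 0 < ε) (γ : Measure (ℝ × ℝ)) [IsProbabilityMeasure γ]
    (hAC : γ ≪ Q01)
    (hInt : Integrable
      (fun p => ((γ.rnDeriv Q01) p).toReal * Real.log ((γ.rnDeriv Q01) p).toReal) Q01) :
    -ε * Real.log (2 * ε)
      ≤ (∫ p, |p.1 - p.2| ∂γ)
        + ε * ∫ p, ((γ.rnDeriv Q01) p).toReal * Real.log ((γ.rnDeriv Q01) p).toReal ∂Q01 := by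
  set ρ : ℝ × ℝ → ℝ := fun p => ((γ.rnDeriv Q01) p).toReal with hρ
  set g : ℝ × ℝ → ℝ := fun p => Real.exp (-|p.1 - p.2| / ε) with hgdef
  set Z : ℝ := ∫ p, g p ∂Q01 with hZ
  have hZpos : 0 < Z := lt_of_lt_of_le (Real.exp_pos _) (hZ_ge hε)
  have hZle : Z ≤ 2 * ε := hZ_le hε
  have hρ_meas : Measurable ρ := (Measure.measurable_rnDeriv _ _).ennreal_toReal
  have hρ_nonneg : ∀ p, 0 ≤ ρ p := fun p => ENNReal.toReal_nonneg
  have hρ_int : Integrable ρ Q01 := Measure.integrable_toReal_rnDeriv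
  have hρ_one : ∫ p, ρ p ∂Q01 = 1 := by
    rw [hρ, Measure.integral_toReal_rnDeriv hAC]
    simp
  have hcρ_int : Integrable (fun p : ℝ × ℝ => ρ p * |p.1 - p.2|) Q01 := by
    refine hρ_int.mono' (hρ_meas.aestronglyMeasurable.mul
      (continuous_abs.comp (continuous_fst.sub continuous_snd)).aestronglyMeasurable) ?_
    filter_upwards [hc_ae_le_one] with p hp
    rw [Real.norm_eq_abs, abs_mul, abs_of_nonneg (hρ_nonneg p), abs_abs]
    nlinarith [hρ_nonneg p, abs_nonneg (p.1 - p.2)]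
  have hA : ∫ p, ρ p * |p.1 - p.2| ∂Q01 = ∫ p, |p.1 - p.2| ∂γ := by
    simpa [smul_eq_mul] using
      integral_rnDeriv_smul (f := fun p : ℝ × ℝ => |p.1 - p.2|) hAC
  have key : ∀ᵐ p ∂Q01,
      (ε - ε * Real.log Z) * ρ p - (ε / Z) * g p
        ≤ ρ p * |p.1 - p.2| + ε * (ρ p * Real.log (ρ p)) := by
    refine ae_of_all _ fun p => ?_
    have hgp : 0 < g p := Real.exp_pos _
    have hkey := mul_log_ge (hρ_nonneg p) (div_pos hgp hZpos)
    have hlog : Real.log (g p / Z) = -|p.1 - p.2| / ε - Real.log Z := by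
      rw [Real.log_div hgp.ne' hZpos.ne', hgdef]
      simp [Real.log_exp]
    rw [hlog] at hkey
    have h2 := mul_le_mul_of_nonneg_left hkey hε.le
    have e1 : ε * (ρ p * (-|p.1 - p.2| / ε - Real.log Z) + ρ p - g p / Z)
        = -(ρ p * |p.1 - p.2|) - (ε * Real.log Z) * ρ p + ε * ρ p - (ε / Z) * g p := by
      field_simp
    rw [show ρ p * (-|p.1 - p.2| / ε - Real.log Z) + ρ p - g p / Z
          = ρ p * (-|p.1 - p.2| / ε - Real.log Z) + ρ p - g p / Z from rfl] at h2
    rw [e1] at h2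
    nlinarith [h2]
  have hf2_int : Integrable (fun p => (ε - ε * Real.log Z) * ρ p - (ε / Z) * g p) Q01 :=
    (hρ_int.const_mul _).sub ((hg_int hε).const_mul _)
  have hf1_int : Integrable (fun p : ℝ × ℝ =>
      ρ p * |p.1 - p.2| + ε * (ρ p * Real.log (ρ p))) Q01 :=
    hcρ_int.add (hInt.const_mul ε)
  have hmono := integral_mono_ae hf2_int hf1_int key
  have hI2 : ∫ p, ((ε - ε * Real.log Z) * ρ p - (ε / Z) * g p) ∂Q01
      = -(ε * Real.log Z) := by
    rw [integral_sub (hρ_int.const_mul _) ((hg_int hε).const_mul _),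
        integral_const_mul, integral_const_mul, hρ_one, ← hZ]
    field_simp
    ring
  have hI1 : ∫ p, (ρ p * |p.1 - p.2| + ε * (ρ p * Real.log (ρ p))) ∂Q01
      = (∫ p, |p.1 - p.2| ∂γ) + ε * ∫ p, ρ p * Real.log (ρ p) ∂Q01 := by
    rw [integral_add hcρ_int (hInt.const_mul ε), integral_const_mul, hA]
  rw [hI2, hI1] at hmono
  have hfinal : -ε * Real.log (2 * ε) ≤ -(ε * Real.log Z) := by
    have := Real.log_le_log hZpos hZle
    nlinarith
  linarith

/-- **Sharpness example**: for `μ⁻ = μ⁺ = Leb|_{[0,1]}` and `c(x,y) = |x−y|`, one has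
`v₀ = 0` and `v_ε ≥ −ε log(2ε) = v₀ + ε log(1/ε) − ε log 2` for every `ε > 0`. -/
theorem entCost_sharpness_example :
    entCost (volume.restrict (Set.Icc (0 : ℝ) 1)) (volume.restrict (Set.Icc (0 : ℝ) 1))
        (fun p : ℝ × ℝ => |p.1 - p.2|) 0 = 0 ∧
    ∀ ε : ℝ, 0 < ε →
      ((-ε * Real.log (2 * ε) : ℝ) : EReal)
        ≤ entCost (volume.restrict (Set.Icc (0 : ℝ) 1)) (volume.restrict (Set.Icc (0 : ℝ) 1))
            (fun p : ℝ × ℝ => |p.1 - p.2|) ε ∧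
      ((ε * Real.log (1 / ε) - ε * Real.log 2 : ℝ) : EReal)
        ≤ entCost (volume.restrict (Set.Icc (0 : ℝ) 1)) (volume.restrict (Set.Icc (0 : ℝ) 1))
            (fun p : ℝ × ℝ => |p.1 - p.2|) ε := by
  constructor
  · apply le_antisymm
    · apply sInf_le
      refine ⟨(volume.restrict (Set.Icc (0 : ℝ) 1)).map (fun x => (x, x)), ?_, ?_, ?_, ?_⟩
      · exact Measure.isProbabilityMeasure_map (measurable_id.prodMk measurable_id).aemeasurable
      · rw [show (fun x : ℝ => (x, x)) = fun x : ℝ => (id x, id x) from rfl,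
          Measure.fst_map_prodMk measurable_id, Measure.map_id]
      · rw [show (fun x : ℝ => (x, x)) = fun x : ℝ => (id x, id x) from rfl,
          Measure.snd_map_prodMk measurable_id, Measure.map_id]
      · have h0 : ∫ p, |p.1 - p.2|
            ∂((volume.restrict (Set.Icc (0 : ℝ) 1)).map (fun x => (x, x))) = 0 := by
          have hf : AEStronglyMeasurable (fun p : ℝ × ℝ => |p.1 - p.2|)
              ((volume.restrict (Set.Icc (0 : ℝ) 1)).map (fun x => (x, x))) :=
            (by continuity : Continuous fun p : ℝ × ℝ => |p.1 - p.2|).aestronglyMeasurable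
          have hphi : Measurable (fun x : ℝ => (x, x)) := measurable_id.prodMk measurable_id
          rw [integral_map hphi.aemeasurable hf]
          simp
        rw [h0]
        simp
    · apply le_sInf
      rintro v ⟨γ, hγ, hfst, hsnd, rfl⟩
      have hA : (0:ℝ) ≤ ∫ p, |p.1 - p.2| ∂γ := integral_nonneg fun p => abs_nonneg _
      rw [EReal.coe_zero, zero_mul, add_zero]
      exact_mod_cast hA
  · intro ε hε
    have hmain : ((-ε * Real.log (2 * ε) : ℝ) : EReal)
        ≤ entCost (volume.restrict (Set.Icc (0 : ℝ) 1)) (volume.restrict (Set.Icc (0 : ℝ) 1))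
            (fun p : ℝ × ℝ => |p.1 - p.2|) ε := by
      apply le_sInf
      rintro v ⟨γ, hγ, hfst, hsnd, rfl⟩
      haveI := hγ
      rw [show (volume.restrict (Set.Icc (0 : ℝ) 1)).prod (volume.restrict (Set.Icc (0 : ℝ) 1))
        = Q01 from rfl, Ent]
      split_ifs with h
      · obtain ⟨hAC, hInt⟩ := h
        have hb := main_bound hε γ hAC hInt
        rw [← EReal.coe_mul, ← EReal.coe_add]
        exact EReal.coe_le_coe_iff.mpr hb
      · rw [EReal.coe_mul_top_of_pos hε, EReal.add_top_of_ne_bot (EReal.coe_ne_bot _)]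
        exact le_top
    refine ⟨hmain, ?_⟩
    have heq : (ε * Real.log (1 / ε) - ε * Real.log 2 : ℝ) = -ε * Real.log (2 * ε) := by
      rw [Real.log_mul two_ne_zero hε.ne', one_div, Real.log_inv]; ring
    rw [heq]
    exact hmain
end
end

section
/- Let f : ℝ^d → ℝ ∪ {+∞} be a proper convex lower semicontinuous function with Legendre transform f*, and set E(x,y) := f(x) + f*(y) − x·y ∈ [0,+∞] for x,y ∈ ℝ^d. If x, y, x' ∈ ℝ^d satisfy x + y − x' ∈ ∂f(x') (i.e. x' = (Id + ∂f)^{-1}(x+y) is the resolvent of f at x+y), then E(x,y) ≥ |x − x'|². -/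
open MeasureTheory Real Set Filter Classical
open scoped ENNReal NNReal Topology

noncomputable section

/-- Legendre transform of an extended-real-valued function on Euclidean space:
`f*(y) = sup_x (⟪x,y⟫ − f(x))`. -/
def legendre {d : ℕ} (f : EuclideanSpace ℝ (Fin d) → EReal) (y : EuclideanSpace ℝ (Fin d)) :
    EReal :=
  ⨆ w : EuclideanSpace ℝ (Fin d), ((inner ℝ w y : ℝ) : EReal) - f w

/-- **Quadratic detachment via Minty's trick**: for a proper convex lsc `f` with duality gap
`E(x,y) = f(x) + f*(y) − x·y`, if `x' = (Id + ∂f)⁻¹(x+y)`, i.e. `x + y − x' ∈ ∂f(x')`,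
then `E(x,y) ≥ |x − x'|²`. -/
theorem quadratic_detachment_resolvent {d : ℕ}
    (f : EuclideanSpace ℝ (Fin d) → EReal)
    (hproper : ∃ x, f x ≠ ⊤) (hbot : ∀ x, f x ≠ ⊥)
    (hconv : ∀ (x y : EuclideanSpace ℝ (Fin d)) (a b : ℝ), 0 ≤ a → 0 ≤ b → a + b = 1 →
      f (a • x + b • y) ≤ (a : EReal) * f x + (b : EReal) * f y)
    (hlsc : LowerSemicontinuous f)
    (x y x' : EuclideanSpace ℝ (Fin d))
    (hsub : ∀ z : EuclideanSpace ℝ (Fin d),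
      f x' + ((inner ℝ (x + y - x') (z - x') : ℝ) : EReal) ≤ f z) :
    ((‖x - x'‖ ^ 2 : ℝ) : EReal) ≤ f x + legendre f y - ((inner ℝ x y : ℝ) : EReal) := by
  obtain ⟨x₀, hx₀⟩ := hproper
  have hx'top : f x' ≠ ⊤ := by
    intro h
    have h2 := hsub x₀
    rw [h, EReal.top_add_of_ne_bot (EReal.coe_ne_bot _)] at h2
    exact hx₀ (top_le_iff.mp h2)
  obtain ⟨r, hr⟩ : ∃ r : ℝ, f x' = (r : EReal) :=
    ⟨(f x').toReal, (EReal.coe_toReal hx'top (hbot x')).symm⟩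
  have hL : (((inner ℝ x' y : ℝ) - r : ℝ) : EReal) ≤ legendre f y := by
    have h3 := le_iSup (fun w => ((inner ℝ w y : ℝ) : EReal) - f w) x'
    rw [hr] at h3
    simpa [EReal.coe_sub, legendre] using h3
  have hLbot : legendre f y ≠ ⊥ := fun h =>
    EReal.coe_ne_bot _ (le_bot_iff.mp (h ▸ hL))
  have hfx : ((r + (inner ℝ (x + y - x') (x - x') : ℝ) : ℝ) : EReal) ≤ f x := by
    have h4 := hsub x
    rw [hr] at h4
    simpa [EReal.coe_add] using h4
  rcases eq_or_ne (f x) ⊤ with htop | hne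
  · rw [htop, EReal.top_add_of_ne_bot hLbot, EReal.top_sub_coe]
    exact le_top
  · obtain ⟨s, hs⟩ : ∃ s : ℝ, f x = (s : EReal) :=
      ⟨(f x).toReal, (EReal.coe_toReal hne (hbot x)).symm⟩
    have key : ((s + ((inner ℝ x' y : ℝ) - r) - (inner ℝ x y : ℝ) : ℝ) : EReal) ≤
        f x + legendre f y - ((inner ℝ x y : ℝ) : EReal) := by
      rw [hs]
      push_cast
      exact EReal.sub_le_sub (add_le_add_right hL _) le_rfl
    refine le_trans ?_ key
    rw [EReal.coe_le_coe_iff]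
    have hs' : r + (inner ℝ (x + y - x') (x - x') : ℝ) ≤ s := by
      rw [hs] at hfx
      exact_mod_cast hfx
    have hexp : (inner ℝ (x + y - x') (x - x') : ℝ)
        = ‖x - x'‖ ^ 2 + (inner ℝ y (x - x') : ℝ) := by
      have hxy : x + y - x' = (x - x') + y := by abel
      rw [hxy, inner_add_left, real_inner_self_eq_norm_sq]
    have h5 : (inner ℝ y (x - x') : ℝ) = (inner ℝ y x : ℝ) - (inner ℝ y x' : ℝ) :=
      inner_sub_right _ _ _
    have c1 : (inner ℝ x' y : ℝ) = (inner ℝ y x' : ℝ) := real_inner_comm _ _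
    have c2 : (inner ℝ x y : ℝ) = (inner ℝ y x : ℝ) := real_inner_comm _ _
    linarith
end
end
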